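/- arXiv:2311.06969 — 12 statements merged into one kernel-verified Lean document; each statement's English description precedes it below -/
import Mathlib

section
/- Let s ∈ [0,1] and define the rounding rule f(k) = k + s for nonnegative integers k. Let v_1, ..., v_n > 0 be real numbers and let h be an apportionment of a positive integer H (nonnegative integers summing to H). Suppose there exists x > 0 such that v_i ≥ x·f(h_i − 1) for every i with h_i > 0 and v_j ≤ x·f(h_j) for every j. Let λ ∈ (0,1) be rational such that λ·h_i is an integer for every i. Then there exists x' > 0 such that v_i ≥ x'·f(λh_i − 1) for every i with λh_i > 0 and v_j ≤ x'·f(λh_j) for every j; that is, λh is an apportionment of λH under the stationary divisor method with parameter s. (This shows stationary divisor methods are proportionally consistent.) -/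
/-- Stationary divisor methods (rounding rule `f(k) = k + s`, `s ∈ [0,1]`) are
proportionally consistent: if `h` is a divisor-method apportionment of `H` for
populations `v` witnessed by divisor `x`, and `λ ∈ (0,1)` is rational with every
`λ·h i` an integer (witnessed by `h'`), then `λh = h'` is a divisor-method
apportionment of `λH`. -/
theorem stmt_0 (n : ℕ) (s : ℝ) (hs0 : 0 ≤ s) (hs1 : s ≤ 1)
    (v : Fin n → ℝ) (hv : ∀ i, 0 < v i)
    (H : ℕ) (hH : 0 < H)
    (h : Fin n → ℕ) (hsum : ∑ i, h i = H)
    (x : ℝ) (hx : 0 < x)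
    (hlow : ∀ i, 0 < h i → x * (((h i - 1 : ℕ) : ℝ) + s) ≤ v i)
    (hup : ∀ j, v j ≤ x * (((h j : ℕ) : ℝ) + s))
    (lam : ℚ) (hlam0 : 0 < lam) (hlam1 : lam < 1)
    (h' : Fin n → ℕ) (hh' : ∀ i, (h' i : ℚ) = lam * (h i : ℚ)) :
    ((∑ i, h' i : ℕ) : ℚ) = lam * (H : ℚ) ∧
    ∃ x' : ℝ, 0 < x' ∧
      (∀ i, 0 < h' i → x' * (((h' i - 1 : ℕ) : ℝ) + s) ≤ v i) ∧
      (∀ j, v j ≤ x' * (((h' j : ℕ) : ℝ) + s)) := by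
  set L : ℝ := (lam : ℝ) with hLdef
  have hL0 : (0:ℝ) < L := by rw [hLdef]; exact_mod_cast hlam0
  have hL1 : L < 1 := by rw [hLdef]; exact_mod_cast hlam1
  have hcast : ∀ i, (h' i : ℝ) = L * (h i : ℝ) := by
    intro i
    rw [hLdef]
    exact_mod_cast congrArg (fun q : ℚ => (q : ℝ)) (hh' i)
  constructor
  · push_cast
    calc (∑ i, (h' i : ℚ)) = ∑ i, lam * (h i : ℚ) := by
          exact Finset.sum_congr rfl fun i _ => hh' i
      _ = lam * ∑ i, (h i : ℚ) := by rw [Finset.mul_sum]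
      _ = lam * (H : ℚ) := by rw [← hsum]; push_cast; ring
  · refine ⟨x / L, div_pos hx hL0, ?_, ?_⟩
    · intro i hi
      have hi1 : 1 ≤ h' i := hi
      have hcasti := hcast i
      have hhi : 0 < h i := by
        by_contra hc
        push_neg at hc
        interval_cases hhi : h i
        simp [hhi] at hcasti
        omega
      have hlowi := hlow i hhi
      have e1 : ((h' i - 1 : ℕ) : ℝ) = (h' i : ℝ) - 1 := by
        push_cast [Nat.cast_sub hi1]; ring
      have e2 : ((h i - 1 : ℕ) : ℝ) = (h i : ℝ) - 1 := by
        push_cast [Nat.cast_sub hhi]; ring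
      rw [e1, hcasti, div_mul_eq_mul_div, div_le_iff₀ hL0]
      rw [e2] at hlowi
      nlinarith [mul_nonneg hx.le (mul_nonneg (by linarith : (0:ℝ) ≤ 1 - s) (by linarith : (0:ℝ) ≤ 1 - L))]
    · intro j
      have hcastj := hcast j
      have hupj := hup j
      rw [hcastj, div_mul_eq_mul_div, le_div_iff₀ hL0]
      nlinarith [mul_nonneg hx.le hs0]
end

section
/- Let f be either the Hill-Huntington rounding rule f(k) = √(k(k+1)) or the Dean rounding rule f(k) = k(k+1)/(k + 1/2) (with f(0) = 0 in both cases). Let v_1, ..., v_n > 0 be real numbers and let h be an apportionment of a positive integer H. Suppose there exists x > 0 such that v_i ≥ x·f(h_i − 1) for every i with h_i > 0 and v_j ≤ x·f(h_j) for every j. Let λ ∈ (0,1) be rational such that λ·h_i is an integer for every i. Then there exists x' > 0 such that v_i ≥ x'·f(λh_i − 1) for every i with λh_i > 0 and v_j ≤ x'·f(λh_j) for every j; that is, λh is an apportionment of λH under the divisor method with rounding rule f. (This shows the Hill-Huntington and Dean methods are proportionally consistent.) -/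
lemma mul_sqrt_eq (L t : ℝ) (hL : 0 ≤ L) :
    L * Real.sqrt t = Real.sqrt (L ^ 2 * t) := by
  rw [Real.sqrt_mul (sq_nonneg L), Real.sqrt_sq hL]

/-- The Hill-Huntington (`f(k) = √(k(k+1))`) and Dean (`f(k) = k(k+1)/(k+1/2)`)
divisor methods are proportionally consistent: if `h` is a divisor-method
apportionment of `H` for populations `v` witnessed by divisor `x`, and
`λ ∈ (0,1)` is rational with every `λ·h i` an integer (witnessed by `h'`),
then `λh = h'` is a divisor-method apportionment of `λH`. -/
theorem stmt_1 (n : ℕ) (f : ℕ → ℝ)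
    (hf : (∀ k : ℕ, f k = Real.sqrt ((k : ℝ) * ((k : ℝ) + 1))) ∨
          (∀ k : ℕ, f k = ((k : ℝ) * ((k : ℝ) + 1)) / ((k : ℝ) + 1 / 2)))
    (v : Fin n → ℝ) (hv : ∀ i, 0 < v i)
    (H : ℕ) (hH : 0 < H)
    (h : Fin n → ℕ) (hsum : ∑ i, h i = H)
    (x : ℝ) (hx : 0 < x)
    (hlow : ∀ i, 0 < h i → x * f (h i - 1) ≤ v i)
    (hup : ∀ j, v j ≤ x * f (h j))
    (lam : ℚ) (hlam0 : 0 < lam) (hlam1 : lam < 1)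
    (h' : Fin n → ℕ) (hh' : ∀ i, (h' i : ℚ) = lam * (h i : ℚ)) :
    ((∑ i, h' i : ℕ) : ℚ) = lam * (H : ℚ) ∧
    ∃ x' : ℝ, 0 < x' ∧
      (∀ i, 0 < h' i → x' * f (h' i - 1) ≤ v i) ∧
      (∀ j, v j ≤ x' * f (h' j)) := by
  set L : ℝ := (lam : ℝ) with hLdef
  have hL0 : (0 : ℝ) < L := by rw [hLdef]; exact_mod_cast hlam0
  have hL1 : L < 1 := by rw [hLdef]; exact_mod_cast hlam1
  have hmR : ∀ i, (h' i : ℝ) = L * (h i : ℝ) := by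
    intro i
    rw [hLdef]
    exact_mod_cast congrArg (fun q : ℚ => (q : ℝ)) (hh' i)
  constructor
  · rw [← hsum]
    push_cast
    rw [Finset.mul_sum]
    exact Finset.sum_congr rfl fun i _ => hh' i
  · refine ⟨x / L, by positivity, ?_, ?_⟩
    · -- lower bounds
      intro i hi
      have hk : 0 < h i := by
        rcases Nat.eq_zero_or_pos (h i) with h0 | h0
        · exfalso
          have := hh' i
          rw [h0] at this
          simp at this
          omega
        · exact h0
      have hM1 : (1 : ℝ) ≤ (h' i : ℝ) := by exact_mod_cast hi
      have hK1 : (1 : ℝ) ≤ (h i : ℝ) := by exact_mod_cast hk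
      have hcM : ((h' i - 1 : ℕ) : ℝ) = (h' i : ℝ) - 1 := by
        rw [Nat.cast_sub hi, Nat.cast_one]
      have hcK : ((h i - 1 : ℕ) : ℝ) = (h i : ℝ) - 1 := by
        rw [Nat.cast_sub hk, Nat.cast_one]
      have key : f (h' i - 1) ≤ L * f (h i - 1) := by
        rcases hf with hfH | hfD
        · rw [hfH, hfH, hcM, hcK, hmR i, mul_sqrt_eq _ _ hL0.le]
          apply Real.sqrt_le_sqrt
          set K := (h i : ℝ)
          have hK1' : 1 ≤ K := hK1
          have hM1' : 1 ≤ L * K := by rw [← hmR i]; exact hM1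
          nlinarith [mul_nonneg (mul_nonneg hL0.le (by linarith : (0:ℝ) ≤ K))
            (by linarith : (0:ℝ) ≤ 1 - L)]
        · rw [hfD, hfD, hcM, hcK, hmR i, mul_div_assoc']
          set K := (h i : ℝ)
          have hK1' : 1 ≤ K := hK1
          have hM1' : 1 ≤ L * K := by rw [← hmR i]; exact hM1
          rw [div_le_div_iff₀ (by linarith) (by linarith)]
          nlinarith [mul_nonneg (mul_nonneg (mul_nonneg hL0.le
            (mul_self_nonneg K)) (by linarith : (0:ℝ) ≤ 1 - L))
            (by linarith : (0:ℝ) ≤ 1), hL0.le,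
            mul_nonneg (by linarith : (0:ℝ) ≤ L * K)
              (mul_nonneg (by linarith : (0:ℝ) ≤ K) (by linarith : (0:ℝ) ≤ 1 - L))]
      calc x / L * f (h' i - 1) ≤ x / L * (L * f (h i - 1)) := by
            apply mul_le_mul_of_nonneg_left key (by positivity)
        _ = x * f (h i - 1) := by field_simp
        _ ≤ v i := hlow i hk
    · -- upper bounds
      intro j
      have key : L * f (h j) ≤ f (h' j) := by
        have hK0 : (0 : ℝ) ≤ (h j : ℝ) := Nat.cast_nonneg _
        rcases hf with hfH | hfD
        · rw [hfH, hfH, hmR j, mul_sqrt_eq _ _ hL0.le]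
          apply Real.sqrt_le_sqrt
          nlinarith [mul_nonneg (mul_nonneg hL0.le hK0)
            (by linarith : (0:ℝ) ≤ 1 - L)]
        · rw [hfD, hfD, hmR j, mul_div_assoc']
          rw [div_le_div_iff₀ (by linarith) (by nlinarith)]
          nlinarith [mul_nonneg (mul_nonneg (mul_nonneg hL0.le
            (mul_self_nonneg ((h j : ℝ)))) (by linarith : (0:ℝ) ≤ 1 - L))
            (by linarith : (0:ℝ) ≤ 1)]
      calc v j ≤ x * f (h j) := hup j
        _ = x / L * (L * f (h j)) := by field_simp
        _ ≤ x / L * f (h' j) := mul_le_mul_of_nonneg_left key (by positivity)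
end

section
/- Let λ ∈ (0,1) be rational, let q be a real number, let k be a positive integer such that λ·k is also a positive integer, and let t ≥ 0 be an integer. Then: if [q] = k + t, then λk ≤ [λq] ≤ λk + t; if [q] = k − t, then λk − t ≤ [λq] ≤ λk; and in both cases, if additionally λ ≤ 1/(2t+1), then [λq] = λk. -/
/-- Nearest-integer rounding lemma: for rational `λ ∈ (0,1)`, a positive integer
`k` with `λ·k = m` a positive integer, and an integer `t ≥ 0`:
if `[q] = k + t` then `λk ≤ [λq] ≤ λk + t`; if `[q] = k − t` then
`λk − t ≤ [λq] ≤ λk`; and in both cases if `λ ≤ 1/(2t+1)` then `[λq] = λk`.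
(Here `round` is nearest-integer rounding: `round q = z ↔ z − 1/2 ≤ q < z + 1/2`.) -/
theorem stmt_3 (lam : ℚ) (hlam0 : 0 < lam) (hlam1 : lam < 1)
    (q : ℝ) (k : ℕ) (hk : 0 < k)
    (m : ℕ) (hm : 0 < m) (hmk : (m : ℚ) = lam * (k : ℚ))
    (t : ℕ) :
    (round q = (k : ℤ) + t →
      (m : ℤ) ≤ round ((lam : ℝ) * q) ∧ round ((lam : ℝ) * q) ≤ (m : ℤ) + t) ∧
    (round q = (k : ℤ) - t →
      (m : ℤ) - t ≤ round ((lam : ℝ) * q) ∧ round ((lam : ℝ) * q) ≤ (m : ℤ)) ∧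
    (lam ≤ 1 / (2 * (t : ℚ) + 1) →
      (round q = (k : ℤ) + t ∨ round q = (k : ℤ) - t) →
      round ((lam : ℝ) * q) = (m : ℤ)) := by
  have hL0 : (0:ℝ) < (lam:ℝ) := by exact_mod_cast hlam0
  have hL1 : (lam:ℝ) < 1 := by exact_mod_cast hlam1
  have hmkR : (m:ℝ) = (lam:ℝ) * k := by exact_mod_cast hmk
  have ht0 : (0:ℝ) ≤ (t:ℝ) := Nat.cast_nonneg t
  have qbounds : ∀ n : ℤ, round q = n → (n:ℝ) - 1/2 ≤ q ∧ q < (n:ℝ) + 1/2 := by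
    intro n h
    rw [round_eq] at h
    have h1 := (Int.floor_eq_iff.mp h).1
    have h2 := (Int.floor_eq_iff.mp h).2
    push_cast at h1 h2
    constructor <;> linarith
  have rge : ∀ (x:ℝ) (n:ℤ), (n:ℝ) - 1/2 ≤ x → n ≤ round x := by
    intro x n h
    rw [round_eq]
    exact Int.le_floor.mpr (by push_cast; linarith)
  have rle : ∀ (x:ℝ) (n:ℤ), x < (n:ℝ) + 1/2 → round x ≤ n := by
    intro x n h
    rw [round_eq]
    have : ⌊x + 1/2⌋ < n + 1 := Int.floor_lt.mpr (by push_cast; linarith)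
    omega
  have hLt_le : (lam:ℝ) * t ≤ t :=
    mul_le_of_le_one_left ht0 hL1.le
  have hLt_nn : (0:ℝ) ≤ (lam:ℝ) * t := mul_nonneg hL0.le ht0
  refine ⟨?_, ?_, ?_⟩
  · intro h
    obtain ⟨h1, h2⟩ := qbounds _ h
    push_cast at h1 h2
    have hlo := mul_le_mul_of_nonneg_left h1 hL0.le
    have hhi := mul_lt_mul_of_pos_left h2 hL0
    constructor
    · apply rge
      push_cast
      nlinarith
    · apply rle
      push_cast
      nlinarith
  · intro h
    obtain ⟨h1, h2⟩ := qbounds _ h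
    push_cast at h1 h2
    have hlo := mul_le_mul_of_nonneg_left h1 hL0.le
    have hhi := mul_lt_mul_of_pos_left h2 hL0
    constructor
    · apply rge
      push_cast
      nlinarith
    · apply rle
      push_cast
      nlinarith
  · intro hsmall hcase
    have h2t : (0:ℚ) < 2 * (t:ℚ) + 1 := by positivity
    have hkey : lam * (2 * (t:ℚ) + 1) ≤ 1 := by
      rw [← le_div_iff₀ h2t]; exact hsmall
    have hkeyR : (lam:ℝ) * (2 * (t:ℝ) + 1) ≤ 1 := by exact_mod_cast hkey
    rcases hcase with h | h
    · obtain ⟨h1, h2⟩ := qbounds _ h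
      push_cast at h1 h2
      have hlo := mul_le_mul_of_nonneg_left h1 hL0.le
      have hhi := mul_lt_mul_of_pos_left h2 hL0
      refine le_antisymm (rle _ _ ?_) (rge _ _ ?_) <;> push_cast <;> nlinarith
    · obtain ⟨h1, h2⟩ := qbounds _ h
      push_cast at h1 h2
      have hlo := mul_le_mul_of_nonneg_left h1 hL0.le
      have hhi := mul_lt_mul_of_pos_left h2 hL0
      refine le_antisymm (rle _ _ ?_) (rge _ _ ?_) <;> push_cast <;> nlinarith
end

section
/- Let q_1, ..., q_n be positive real numbers with q_1 + ... + q_n = H for a positive integer H. Let h be a vector of nonnegative integers with h_i ∈ {⌊q_i⌋, ⌈q_i⌉} for all i and h_1 + ... + h_n = H. Let λ ∈ (0,1) be rational with λ·h_i an integer for every i, and let h' be a vector of nonnegative integers with h'_i ∈ {⌊λq_i⌋, ⌈λq_i⌉} for all i and h'_1 + ... + h'_n = λH. Then the number of indices i with q_i not an integer and h_i = ⌈q_i⌉ equals the number of indices i with λq_i not an integer and h'_i = ⌈λq_i⌉; equivalently, the number of states receiving their upper (respectively lower) quota is the same before and after scaling by λ. -/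
open Classical in
lemma aux2 (t : ℝ) (y : ℤ) (hy : y = ⌊t⌋ ∨ y = ⌈t⌉) :
    (if (¬∃ z : ℤ, t = (z : ℝ)) ∧ y = ⌈t⌉ then (1:ℤ) else 0) = y - ⌊t⌋ := by
  by_cases hz : ∃ z : ℤ, t = (z : ℝ)
  · obtain ⟨z, rfl⟩ := hz
    simp only [Int.floor_intCast, Int.ceil_intCast] at hy ⊢
    rcases hy with rfl | rfl <;> simp
  · have hfl : (⌊t⌋ : ℝ) < t :=
      lt_of_le_of_ne (Int.floor_le t) (fun h => hz ⟨⌊t⌋, h.symm⟩)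
    have hcl : t < (⌈t⌉ : ℝ) :=
      lt_of_le_of_ne (Int.le_ceil t) (fun h => hz ⟨⌈t⌉, h⟩)
    have hcf : ⌈t⌉ = ⌊t⌋ + 1 := by
      have h1 : ⌈t⌉ ≤ ⌊t⌋ + 1 := Int.ceil_le_floor_add_one t
      have h2 : ⌊t⌋ < ⌈t⌉ := by exact_mod_cast hfl.trans hcl
      omega
    rcases hy with rfl | rfl
    · have : ¬ (⌊t⌋ = ⌈t⌉) := by omega
      simp [this]
    · simp [hz, hcf]

open Classical in
lemma aux1 (x lam : ℝ) (h0 : 0 < lam) (h1 : lam < 1) (y m : ℤ)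
    (hy : y = ⌊x⌋ ∨ y = ⌈x⌉) (hm : (m : ℝ) = lam * y) :
    (if (¬∃ z : ℤ, x = (z : ℝ)) ∧ y = ⌈x⌉ then (1:ℤ) else 0) = m - ⌊lam * x⌋ := by
  by_cases hz : ∃ z : ℤ, x = (z : ℝ)
  · obtain ⟨z, rfl⟩ := hz
    simp only [Int.floor_intCast, Int.ceil_intCast] at hy
    have hyz : y = z := by rcases hy with rfl | rfl <;> rfl
    subst hyz
    have hfl : ⌊lam * ((y : ℤ) : ℝ)⌋ = m := by
      rw [← hm]; exact Int.floor_intCast m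
    rw [if_neg (fun hc => hc.1 ⟨y, rfl⟩), hfl]
    omega
  · have hfl : (⌊x⌋ : ℝ) < x :=
      lt_of_le_of_ne (Int.floor_le x) (fun h => hz ⟨⌊x⌋, h.symm⟩)
    have hcl : x < (⌈x⌉ : ℝ) :=
      lt_of_le_of_ne (Int.le_ceil x) (fun h => hz ⟨⌈x⌉, h⟩)
    have hcf : ⌈x⌉ = ⌊x⌋ + 1 := by
      have h1 : ⌈x⌉ ≤ ⌊x⌋ + 1 := Int.ceil_le_floor_add_one x
      have h2 : ⌊x⌋ < ⌈x⌉ := by exact_mod_cast hfl.trans hcl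
      omega
    rcases hy with rfl | rfl
    · rw [if_neg (fun hc => by omega)]
      have hflr : ⌊lam * x⌋ = m := by
        rw [Int.floor_eq_iff]
        constructor
        · nlinarith
        · push_cast
          have hx1 : x < (⌊x⌋ : ℝ) + 1 := by
            have : ((⌈x⌉:ℤ):ℝ) = (⌊x⌋:ℝ) + 1 := by exact_mod_cast hcf
            linarith
          nlinarith [mul_lt_mul_of_pos_left hx1 h0]
      omega
    · rw [if_pos ⟨hz, rfl⟩]
      have hflr : ⌊lam * x⌋ = m - 1 := by
        rw [Int.floor_eq_iff]
        constructor
        · push_cast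
          nlinarith [hcl, hfl, (by exact_mod_cast hcf : ((⌈x⌉:ℤ):ℝ) = (⌊x⌋:ℝ) + 1)]
        · push_cast
          nlinarith
      omega

/-- For quotas `q i > 0` summing to `H`, an allocation `h` satisfying quota and
summing to `H`, a rational `λ ∈ (0,1)` with every `λ·h i` an integer, and an
allocation `h'` satisfying quota for the scaled quotas `λ·q i` and summing to
`λH = H'`: the number of states receiving their upper quota (non-integer quota
rounded up) is the same before and after scaling by `λ`. -/
theorem stmt_6 (n : ℕ) (H : ℕ) (hH : 0 < H)
    (q : Fin n → ℝ) (hq : ∀ i, 0 < q i) (hqsum : ∑ i, q i = (H : ℝ))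
    (h : Fin n → ℕ) (hquota : ∀ i, (h i : ℤ) = ⌊q i⌋ ∨ (h i : ℤ) = ⌈q i⌉)
    (hsum : ∑ i, h i = H)
    (lam : ℚ) (hlam0 : 0 < lam) (hlam1 : lam < 1)
    (hint : ∀ i, ∃ m : ℕ, (m : ℚ) = lam * (h i : ℚ))
    (H' : ℕ) (hH' : (H' : ℚ) = lam * (H : ℚ))
    (h' : Fin n → ℕ)
    (hquota' : ∀ i, (h' i : ℤ) = ⌊(lam : ℝ) * q i⌋ ∨ (h' i : ℤ) = ⌈(lam : ℝ) * q i⌉)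
    (hsum' : ∑ i, h' i = H') :
    {i : Fin n | ¬(∃ z : ℤ, q i = (z : ℝ)) ∧ (h i : ℤ) = ⌈q i⌉}.ncard =
      {i : Fin n | ¬(∃ z : ℤ, (lam : ℝ) * q i = (z : ℝ)) ∧
        (h' i : ℤ) = ⌈(lam : ℝ) * q i⌉}.ncard := by
  classical
  choose m hmspec using hint
  have hlam0R : (0:ℝ) < (lam : ℝ) := by exact_mod_cast hlam0
  have hlam1R : ((lam : ℝ)) < 1 := by exact_mod_cast hlam1
  have hmR : ∀ i, (((m i : ℤ)) : ℝ) = (lam : ℝ) * (((h i : ℤ)) : ℝ) := by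
    intro i
    have := hmspec i
    push_cast
    exact_mod_cast this
  have e1 : ∀ i, (if (¬∃ z : ℤ, q i = (z : ℝ)) ∧ (h i : ℤ) = ⌈q i⌉ then (1:ℤ) else 0)
      = (m i : ℤ) - ⌊(lam : ℝ) * q i⌋ :=
    fun i => aux1 (q i) lam hlam0R hlam1R _ _ (hquota i) (hmR i)
  have e2 : ∀ i, (if (¬∃ z : ℤ, (lam : ℝ) * q i = (z : ℝ)) ∧ (h' i : ℤ) = ⌈(lam : ℝ) * q i⌉
        then (1:ℤ) else 0)
      = (h' i : ℤ) - ⌊(lam : ℝ) * q i⌋ :=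
    fun i => aux2 _ _ (hquota' i)
  have hmsum : ∑ i, m i = H' := by
    have hs : (∑ i, (h i : ℚ)) = (H : ℚ) := by exact_mod_cast hsum
    have : ((∑ i, m i : ℕ) : ℚ) = (H' : ℚ) := by
      push_cast
      rw [Finset.sum_congr rfl (fun i _ => hmspec i), ← Finset.mul_sum, hs, hH']
    exact_mod_cast this
  have cardeq : ∀ (P : Fin n → Prop) (F : Fin n → ℤ),
      (∀ i, P i → F i = 1) → (∀ i, ¬P i → F i = 0) →
      ∑ i, F i = ({i | P i}.ncard : ℤ) := by
    intro P F h1 h0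
    rw [← Finset.sum_filter_add_sum_filter_not Finset.univ P F]
    rw [Finset.sum_congr rfl (fun i hi => h1 i (Finset.mem_filter.mp hi).2),
        Finset.sum_congr rfl (fun i hi => h0 i (Finset.mem_filter.mp hi).2)]
    have hnc : {i | P i}.ncard = (Finset.univ.filter P).card := by
      rw [← Set.ncard_coe_finset]; congr 1; ext i; simp
    rw [hnc]
    simp
  have p1 : ∀ i, ((¬∃ z : ℤ, q i = (z : ℝ)) ∧ (h i : ℤ) = ⌈q i⌉) →
      (m i : ℤ) - ⌊(lam : ℝ) * q i⌋ = 1 := by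
    intro i hp; have := e1 i; rw [if_pos hp] at this; exact this.symm
  have p0 : ∀ i, ¬((¬∃ z : ℤ, q i = (z : ℝ)) ∧ (h i : ℤ) = ⌈q i⌉) →
      (m i : ℤ) - ⌊(lam : ℝ) * q i⌋ = 0 := by
    intro i hp; have := e1 i; rw [if_neg hp] at this; exact this.symm
  have p1' : ∀ i, ((¬∃ z : ℤ, (lam : ℝ) * q i = (z : ℝ)) ∧ (h' i : ℤ) = ⌈(lam : ℝ) * q i⌉) →
      (h' i : ℤ) - ⌊(lam : ℝ) * q i⌋ = 1 := by
    intro i hp; have := e2 i; rw [if_pos hp] at this; exact this.symm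
  have p0' : ∀ i, ¬((¬∃ z : ℤ, (lam : ℝ) * q i = (z : ℝ)) ∧ (h' i : ℤ) = ⌈(lam : ℝ) * q i⌉) →
      (h' i : ℤ) - ⌊(lam : ℝ) * q i⌋ = 0 := by
    intro i hp; have := e2 i; rw [if_neg hp] at this; exact this.symm
  have c1 := cardeq _ _ p1 p0
  have c2 := cardeq _ _ p1' p0'
  have hsums : ∑ i, ((m i : ℤ) - ⌊(lam : ℝ) * q i⌋)
      = ∑ i, ((h' i : ℤ) - ⌊(lam : ℝ) * q i⌋) := by
    rw [Finset.sum_sub_distrib, Finset.sum_sub_distrib]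
    have h1 : ∑ i, ((h' i : ℤ)) = (H' : ℤ) := by exact_mod_cast hsum'
    have h2 : ∑ i, ((m i : ℤ)) = (H' : ℤ) := by exact_mod_cast hmsum
    rw [h1, h2]
  have : ({i : Fin n | (¬∃ z : ℤ, q i = (z : ℝ)) ∧ (h i : ℤ) = ⌈q i⌉}.ncard : ℤ)
      = ({i : Fin n | (¬∃ z : ℤ, (lam : ℝ) * q i = (z : ℝ)) ∧
          (h' i : ℤ) = ⌈(lam : ℝ) * q i⌉}.ncard : ℤ) := by
    rw [← c1, ← c2, hsums]
  exact_mod_cast this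
end

section
/- Let F be an apportionment method satisfying quota: for each population vector v of positive reals and each positive integer house size H, F(v, H) is a vector of nonnegative integers summing to H with F(v,H)_i ∈ {⌊q_i⌋, ⌈q_i⌉} for each i, where q_i = H·v_i/V. Suppose F is proportionally consistent, F(v, H) = h, and λ ∈ (0,1) is rational with every λ·h_i an integer. Then the lower-quota sets coincide: {i : h_i = ⌊q_i⌋} = {i : F(v,λH)_i = ⌊λq_i⌋}, and the upper-quota sets coincide: {i : q_i ∉ ℤ and h_i = ⌈q_i⌉} = {i : λq_i ∉ ℤ and F(v,λH)_i = ⌈λq_i⌉}. -/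
lemma quota_key (q lam : ℝ) (hl : 0 < lam) (a b : ℤ)
    (ha : a = ⌊q⌋ ∨ a = ⌈q⌉) (hb : b = ⌊lam * q⌋ ∨ b = ⌈lam * q⌉)
    (hab : (b : ℝ) = lam * a) :
    (a = ⌊q⌋ ↔ b = ⌊lam * q⌋) ∧
    (((¬∃ z : ℤ, q = (z : ℝ)) ∧ a = ⌈q⌉) ↔
      ((¬∃ z : ℤ, lam * q = (z : ℝ)) ∧ b = ⌈lam * q⌉)) := by
  constructor
  · constructor
    · intro haf
      rcases hb with hb | hb
      · exact hb
      · -- b = ⌈lam q⌉ ≥ lam q; also b = lam a ≤ lam q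
        have haq : (a : ℝ) ≤ q := by rw [haf]; exact Int.floor_le q
        have h1 : (b : ℝ) ≤ lam * q := by rw [hab]; nlinarith
        have h2 : lam * q ≤ (b : ℝ) := hb ▸ Int.le_ceil _
        have heq : (b : ℝ) = lam * q := le_antisymm h1 h2
        rw [show b = ⌊(b:ℝ)⌋ by simp, heq]
      -- done?
    · intro hbf
      have h1 : (b : ℝ) ≤ lam * q := hbf ▸ Int.floor_le _
      have h2 : (a : ℝ) ≤ q := by
        rw [hab] at h1
        exact le_of_mul_le_mul_left h1 hl
      rcases ha with ha | ha
      · exact ha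
      · have h3 : q ≤ (a : ℝ) := ha ▸ Int.le_ceil _
        have : (a : ℝ) = q := le_antisymm h2 h3
        rw [show a = ⌊(a:ℝ)⌋ by simp, this]
  · constructor
    · rintro ⟨hqz, hac⟩
      have hqlt : q < (a : ℝ) := by
        rcases lt_or_eq_of_le (hac ▸ Int.le_ceil q : q ≤ (a:ℝ)) with h | h
        · exact h
        · exact absurd ⟨a, h⟩ hqz
      have hblt : lam * q < (b : ℝ) := by rw [hab]; nlinarith
      have hbne : b ≠ ⌊lam * q⌋ := by
        intro h
        have := Int.floor_le (lam * q)
        rw [← h] at this; linarith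
      have hbc : b = ⌈lam * q⌉ := hb.resolve_left hbne
      refine ⟨?_, hbc⟩
      rintro ⟨z, hz⟩
      have : (⌈lam * q⌉ : ℝ) = lam * q := by rw [hz]; simp
      rw [← hbc] at this; linarith
    · rintro ⟨hqz, hbc⟩
      have hblt : lam * q < (b : ℝ) := by
        rcases lt_or_eq_of_le (hbc ▸ Int.le_ceil (lam*q) : lam*q ≤ (b:ℝ)) with h | h
        · exact h
        · exact absurd ⟨b, h⟩ hqz
      have hqlt : q < (a : ℝ) := by
        rw [hab] at hblt
        exact lt_of_mul_lt_mul_left hblt hl.le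
      have hane : a ≠ ⌊q⌋ := by
        intro h
        have := Int.floor_le q
        rw [← h] at this; linarith
      refine ⟨?_, ha.resolve_left hane⟩
      rintro ⟨z, hz⟩
      have hc : a = ⌈q⌉ := ha.resolve_left hane
      have : (⌈q⌉ : ℝ) = q := by rw [hz]; simp
      rw [← hc] at this; linarith



/-- Prop. 2(i): if an apportionment method `F` satisfies quota and is
proportionally consistent, `F(v,H) = h`, and `λ ∈ (0,1)` is rational with every
`λ·h i` an integer, then the lower-quota and upper-quota sets at `(v, H)` and
`(v, λH)` coincide. Quotas at house size `H` are `q i = H·v i / V` and at house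
size `λH` they are `λ·q i`. -/
theorem stmt_7 (n : ℕ)
    (F : (Fin n → ℝ) → ℕ → (Fin n → ℕ))
    (hFsum : ∀ (v : Fin n → ℝ), (∀ i, 0 < v i) → ∀ H : ℕ, 0 < H →
      ∑ i, F v H i = H)
    (hFquota : ∀ (v : Fin n → ℝ), (∀ i, 0 < v i) → ∀ H : ℕ, 0 < H → ∀ i,
      (F v H i : ℤ) = ⌊(H : ℝ) * v i / ∑ j, v j⌋ ∨
      (F v H i : ℤ) = ⌈(H : ℝ) * v i / ∑ j, v j⌉)
    (hFpc : ∀ (v : Fin n → ℝ), (∀ i, 0 < v i) → ∀ H : ℕ, 0 < H →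
      ∀ lam : ℚ, 0 < lam → lam < 1 →
      (∀ i, ∃ m : ℕ, (m : ℚ) = lam * (F v H i : ℚ)) →
      ∀ H' : ℕ, (H' : ℚ) = lam * (H : ℚ) →
      ∀ i, (F v H' i : ℚ) = lam * (F v H i : ℚ))
    (v : Fin n → ℝ) (hv : ∀ i, 0 < v i) (H : ℕ) (hH : 0 < H)
    (lam : ℚ) (hlam0 : 0 < lam) (hlam1 : lam < 1)
    (hint : ∀ i, ∃ m : ℕ, (m : ℚ) = lam * (F v H i : ℚ))
    (H' : ℕ) (hH' : (H' : ℚ) = lam * (H : ℚ)) :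
    {i : Fin n | (F v H i : ℤ) = ⌊(H : ℝ) * v i / ∑ j, v j⌋} =
      {i : Fin n | (F v H' i : ℤ) = ⌊(lam : ℝ) * ((H : ℝ) * v i / ∑ j, v j)⌋} ∧
    {i : Fin n | ¬(∃ z : ℤ, (H : ℝ) * v i / ∑ j, v j = (z : ℝ)) ∧
        (F v H i : ℤ) = ⌈(H : ℝ) * v i / ∑ j, v j⌉} =
      {i : Fin n | ¬(∃ z : ℤ, (lam : ℝ) * ((H : ℝ) * v i / ∑ j, v j) = (z : ℝ)) ∧
        (F v H' i : ℤ) = ⌈(lam : ℝ) * ((H : ℝ) * v i / ∑ j, v j)⌉} := by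
  have hH'R : (H' : ℝ) = (lam : ℝ) * (H : ℝ) := by exact_mod_cast hH'
  have hH'pos : 0 < H' := by
    have : (0 : ℚ) < (H' : ℚ) := by
      rw [hH']; positivity
    exact_mod_cast this
  have key : ∀ i : Fin n,
      ((F v H i : ℤ) = ⌊(H : ℝ) * v i / ∑ j, v j⌋ ↔
        (F v H' i : ℤ) = ⌊(lam : ℝ) * ((H : ℝ) * v i / ∑ j, v j)⌋) ∧
      (((¬∃ z : ℤ, (H : ℝ) * v i / ∑ j, v j = (z : ℝ)) ∧
          (F v H i : ℤ) = ⌈(H : ℝ) * v i / ∑ j, v j⌉) ↔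
        ((¬∃ z : ℤ, (lam : ℝ) * ((H : ℝ) * v i / ∑ j, v j) = (z : ℝ)) ∧
          (F v H' i : ℤ) = ⌈(lam : ℝ) * ((H : ℝ) * v i / ∑ j, v j)⌉)) := by
    intro i
    have hq' : (H' : ℝ) * v i / ∑ j, v j = (lam : ℝ) * ((H : ℝ) * v i / ∑ j, v j) := by
      rw [hH'R]; ring
    have hb := hFquota v hv H' hH'pos i
    rw [hq'] at hb
    have hab : ((F v H' i : ℤ) : ℝ) = (lam : ℝ) * ((F v H i : ℤ) : ℝ) := by
      have := hFpc v hv H hH lam hlam0 hlam1 hint H' hH' i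
      push_cast
      exact_mod_cast this
    exact quota_key ((H : ℝ) * v i / ∑ j, v j) (lam : ℝ)
      (by exact_mod_cast hlam0) (F v H i) (F v H' i)
      (hFquota v hv H hH i) hb hab
  constructor
  · ext i; exact (key i).1
  · ext i; exact (key i).2
end

section
/- Fix s ∈ [0,1). Let v_1, ..., v_n > 0 be real numbers with total V, let H be a positive integer, and let h be a shift-quota apportionment of H with parameter s for v. Let λ ∈ (0,1) be rational such that λ·h_i is an integer for every i. Then λh is a shift-quota apportionment of λH with parameter s for v. (Shift-quota methods, including Hamilton's method for s = 0, are proportionally consistent.) -/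
/-- The shifted quota of state `i` with parameter `s` at house size `H`:
`q^s_i = (H + s)·v_i / V`. -/
noncomputable def shiftedQuota (n : ℕ) (s : ℝ) (v : Fin n → ℝ) (H : ℕ) (i : Fin n) : ℝ :=
  ((H : ℝ) + s) * v i / ∑ j, v j

/-- `h` is a shift-quota apportionment of `H` with parameter `s` for populations `v`:
the `h i` sum to `H`, each `h i` is `⌊q^s_i⌋` or `⌊q^s_i⌋ + 1`, and the extra seats
go to the states with the highest fractional remainders. -/
def IsShiftQuotaApp (n : ℕ) (s : ℝ) (v : Fin n → ℝ) (H : ℕ) (h : Fin n → ℕ) : Prop :=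
  (∑ i, h i = H) ∧
  (∀ i, ⌊shiftedQuota n s v H i⌋ ≤ (h i : ℤ) ∧ (h i : ℤ) ≤ ⌊shiftedQuota n s v H i⌋ + 1) ∧
  (∀ i j, (h i : ℤ) = ⌊shiftedQuota n s v H i⌋ → (h j : ℤ) = ⌊shiftedQuota n s v H j⌋ + 1 →
    shiftedQuota n s v H i - ⌊shiftedQuota n s v H i⌋ ≤
      shiftedQuota n s v H j - ⌊shiftedQuota n s v H j⌋)

/-- Shift-quota methods (including Hamilton's method, `s = 0`) are proportionally
consistent: if `h` is a shift-quota apportionment of `H` with parameter `s` and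
`λ ∈ (0,1)` is rational with every `λ·h i` an integer (witnessed by `h'`, with
`λH = H'`), then `λh = h'` is a shift-quota apportionment of `λH` with parameter `s`. -/
theorem stmt_9 (n : ℕ) (s : ℝ) (hs0 : 0 ≤ s) (hs1 : s < 1)
    (v : Fin n → ℝ) (hv : ∀ i, 0 < v i)
    (H : ℕ) (hH : 0 < H)
    (h : Fin n → ℕ) (happ : IsShiftQuotaApp n s v H h)
    (lam : ℚ) (hlam0 : 0 < lam) (hlam1 : lam < 1)
    (h' : Fin n → ℕ) (hh' : ∀ i, (h' i : ℚ) = lam * (h i : ℚ))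
    (H' : ℕ) (hH' : (H' : ℚ) = lam * (H : ℚ)) :
    IsShiftQuotaApp n s v H' h' := by
  obtain ⟨hsum, hbd, hord⟩ := happ
  have hn : 0 < n := by
    rcases Nat.eq_zero_or_pos n with rfl | hn
    · simp at hsum; omega
    · exact hn
  haveI : NeZero n := ⟨hn.ne'⟩
  have hV : 0 < ∑ j, v j := Finset.sum_pos (fun j _ => hv j) Finset.univ_nonempty
  set L : ℝ := (lam : ℝ) with hLdef
  have hL0 : (0:ℝ) < L := by rw [hLdef]; exact_mod_cast hlam0
  have hL1 : L < 1 := by rw [hLdef]; exact_mod_cast hlam1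
  have hHr : (H' : ℝ) = L * H := by
    have h1 := congrArg (fun q : ℚ => (q : ℝ)) hH'
    push_cast at h1; exact h1
  have hhr : ∀ i, (h' i : ℝ) = L * h i := by
    intro i
    have h1 := congrArg (fun q : ℚ => (q : ℝ)) (hh' i)
    push_cast at h1; exact h1
  have Qrel : ∀ i, shiftedQuota n s v H' i
      = L * shiftedQuota n s v H i + (1-L) * (s * v i / ∑ j, v j) := by
    intro i
    simp only [shiftedQuota]
    rw [hHr]
    field_simp
    ring
  have ht0 : ∀ i, 0 ≤ s * v i / ∑ j, v j :=
    fun i => div_nonneg (mul_nonneg hs0 (hv i).le) hV.le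
  have htle : ∀ i, s * v i / ∑ j, v j ≤ s := by
    intro i
    rw [div_le_iff₀ hV]
    have hle : v i ≤ ∑ j, v j := Finset.single_le_sum (fun j _ => (hv j).le) (Finset.mem_univ i)
    nlinarith
  have hQlow : ∀ i, shiftedQuota n s v H i - 1 < h i := by
    intro i
    have h1 := (hbd i).1
    have h2 : ((⌊shiftedQuota n s v H i⌋ : ℤ):ℝ) ≤ (h i : ℝ) := by exact_mod_cast h1
    have h3 := Int.lt_floor_add_one (shiftedQuota n s v H i)
    linarith
  have hQhigh : ∀ i, (h i : ℝ) ≤ shiftedQuota n s v H i + 1 := by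
    intro i
    have h1 := (hbd i).2
    have h2 : (h i : ℝ) ≤ ((⌊shiftedQuota n s v H i⌋ : ℤ):ℝ) + 1 := by exact_mod_cast h1
    have h3 := Int.floor_le (shiftedQuota n s v H i)
    linarith
  refine ⟨?_, ?_, ?_⟩
  · have hq : ((∑ i, h' i : ℕ) : ℚ) = (H' : ℚ) := by
      push_cast
      rw [hH', ← hsum]
      push_cast
      rw [Finset.mul_sum]
      exact Finset.sum_congr rfl fun i _ => hh' i
    exact_mod_cast hq
  · intro i
    constructor
    · have hr : shiftedQuota n s v H' i < ((h' i : ℤ) : ℝ) + 1 := by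
        push_cast
        rw [Qrel i, hhr i]
        nlinarith [mul_pos hL0 (by linarith [hQlow i] : (0:ℝ) < (h i : ℝ) + 1 - shiftedQuota n s v H i),
          mul_le_mul_of_nonneg_left (htle i) (by linarith : (0:ℝ) ≤ 1 - L),
          mul_pos (by linarith : (0:ℝ) < 1 - L) (by linarith : (0:ℝ) < 1 - s)]
      have := Int.floor_lt.mpr (by push_cast at hr ⊢; linarith : shiftedQuota n s v H' i < (((h' i : ℤ) + 1 : ℤ) : ℝ))
      omega
    · have hr : (((h' i : ℤ) - 1 : ℤ) : ℝ) ≤ shiftedQuota n s v H' i := by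
        push_cast
        rw [Qrel i, hhr i]
        nlinarith [mul_le_mul_of_nonneg_left (hQhigh i) hL0.le,
          mul_nonneg (by linarith : (0:ℝ) ≤ 1 - L) (ht0 i)]
      have := Int.le_floor.mpr hr
      omega
  · intro i j hi hj
    have hfi : ((⌊shiftedQuota n s v H' i⌋ : ℤ) : ℝ) = (h' i : ℝ) := by exact_mod_cast hi.symm
    have hfj : ((⌊shiftedQuota n s v H' j⌋ : ℤ) : ℝ) = (h' j : ℝ) - 1 := by
      have : ((h' j : ℤ) : ℝ) = ((⌊shiftedQuota n s v H' j⌋ + 1 : ℤ) : ℝ) := by exact_mod_cast congrArg (fun z : ℤ => (z:ℝ)) hj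
      push_cast at this ⊢
      linarith
    rw [hfi, hfj]
    have hci : (h i : ℤ) = ⌊shiftedQuota n s v H i⌋ ∨ (h i : ℤ) = ⌊shiftedQuota n s v H i⌋ + 1 := by
      have := hbd i; omega
    have hcj : (h j : ℤ) = ⌊shiftedQuota n s v H j⌋ ∨ (h j : ℤ) = ⌊shiftedQuota n s v H j⌋ + 1 := by
      have := hbd j; omega
    rcases hcj with hcj | hcj
    · -- j had no extra seat at H: then Q'_j ≥ h'_j, while Q'_i < h'_i + 1
      have hQj : (h j : ℝ) ≤ shiftedQuota n s v H j := by
        have h2 : ((h j : ℤ) : ℝ) = ((⌊shiftedQuota n s v H j⌋ : ℤ) : ℝ) := by exact_mod_cast congrArg (fun z : ℤ => (z:ℝ)) hcj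
        have h3 := Int.floor_le (shiftedQuota n s v H j)
        push_cast at h2
        linarith
      have h1 : shiftedQuota n s v H' i < (h' i : ℝ) + 1 := by
        have := Int.lt_floor_add_one (shiftedQuota n s v H' i)
        rw [← hfi]; push_cast; push_cast at this; linarith
      have h2 : (h' j : ℝ) ≤ shiftedQuota n s v H' j := by
        rw [Qrel j, hhr j]
        nlinarith [mul_le_mul_of_nonneg_left hQj hL0.le,
          mul_nonneg (by linarith : (0:ℝ) ≤ 1 - L) (ht0 j)]
      linarith
    · rcases hci with hci | hci
      · -- i no extra, j extra at H: use the old ordering condition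
        have hold := hord i j hci hcj
        have hfiH : ((⌊shiftedQuota n s v H i⌋ : ℤ) : ℝ) = (h i : ℝ) := by exact_mod_cast hci.symm
        have hfjH : ((⌊shiftedQuota n s v H j⌋ : ℤ) : ℝ) = (h j : ℝ) - 1 := by
          have : ((h j : ℤ) : ℝ) = ((⌊shiftedQuota n s v H j⌋ + 1 : ℤ) : ℝ) := by exact_mod_cast congrArg (fun z : ℤ => (z:ℝ)) hcj
          push_cast at this ⊢; linarith
        rw [hfiH, hfjH] at hold
        rw [Qrel i, Qrel j, hhr i, hhr j]
        nlinarith [mul_le_mul_of_nonneg_left hold hL0.le,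
          mul_nonneg (by linarith : (0:ℝ) ≤ 1 - L) (ht0 j),
          mul_le_mul_of_nonneg_left (htle i) (by linarith : (0:ℝ) ≤ 1 - L),
          mul_pos (by linarith : (0:ℝ) < 1 - L) (by linarith : (0:ℝ) < 1 - s)]
      · -- both extra at H
        have hQi : shiftedQuota n s v H i < (h i : ℝ) := by
          have h2 : ((h i : ℤ) : ℝ) = ((⌊shiftedQuota n s v H i⌋ + 1 : ℤ) : ℝ) := by exact_mod_cast congrArg (fun z : ℤ => (z:ℝ)) hci
          have h3 := Int.lt_floor_add_one (shiftedQuota n s v H i)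
          push_cast at h2
          linarith
        have hQj : (h j : ℝ) - 1 ≤ shiftedQuota n s v H j := by
          have h2 : ((h j : ℤ) : ℝ) = ((⌊shiftedQuota n s v H j⌋ + 1 : ℤ) : ℝ) := by exact_mod_cast congrArg (fun z : ℤ => (z:ℝ)) hcj
          have h3 := Int.floor_le (shiftedQuota n s v H j)
          push_cast at h2
          linarith
        rw [Qrel i, Qrel j, hhr i, hhr j]
        have A := mul_pos hL0 (by linarith : (0:ℝ) < (h i : ℝ) - shiftedQuota n s v H i)
        have B := mul_nonneg hL0.le (by linarith : (0:ℝ) ≤ shiftedQuota n s v H j - (h j : ℝ) + 1)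
        have C := mul_nonneg (by linarith : (0:ℝ) ≤ 1 - L) (ht0 j)
        have D := mul_le_mul_of_nonneg_left (htle i) (by linarith : (0:ℝ) ≤ 1 - L)
        have E := mul_pos (by linarith : (0:ℝ) < 1 - L) (by linarith : (0:ℝ) < 1 - s)
        linarith [A, B, C, D, E]
end

section
/- Let v_1, ..., v_n > 0 be real numbers with total V, let H be a positive integer, and let h be a LAR apportionment of H for v with quotas q_i = H·v_i/V. Let λ ∈ (0,1) be rational such that λ·h_i is an integer for every i. Then λh is a LAR apportionment of λH for v (whose quotas are λq_i). (The Large method is proportionally consistent.) -/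
/-- The quota of state `i` at house size `H`: `q i = H·v_i / V`. -/
noncomputable def quota (n : ℕ) (v : Fin n → ℝ) (H : ℕ) (i : Fin n) : ℝ :=
  (H : ℝ) * v i / ∑ j, v j

/-- `h` is a LAR (Large method) apportionment of `H` for `v`: the `h i` sum to `H`,
each state receives `⌊q i⌋` seats or (if `q i` is not an integer) `⌊q i⌋ + 1` seats,
and the extra seats go one each to the largest states whose quotas are not integers. -/
def IsLAR (n : ℕ) (v : Fin n → ℝ) (H : ℕ) (h : Fin n → ℕ) : Prop :=
  (∑ i, h i = H) ∧
  (∀ i, (h i : ℤ) = ⌊quota n v H i⌋ ∨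
    (¬(∃ z : ℤ, quota n v H i = (z : ℝ)) ∧ (h i : ℤ) = ⌊quota n v H i⌋ + 1)) ∧
  (∀ i j, ¬(∃ z : ℤ, quota n v H i = (z : ℝ)) → (h i : ℤ) = ⌊quota n v H i⌋ →
    (h j : ℤ) = ⌊quota n v H j⌋ + 1 → v i ≤ v j)

/-- The Large method is proportionally consistent: if `h` is a LAR apportionment
of `H` for `v` and `λ ∈ (0,1)` is rational with every `λ·h i` an integer
(witnessed by `h'`, with `λH = H'`), then `λh = h'` is a LAR apportionment of `λH`. -/
theorem stmt_10 (n : ℕ)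
    (v : Fin n → ℝ) (hv : ∀ i, 0 < v i)
    (H : ℕ) (hH : 0 < H)
    (h : Fin n → ℕ) (happ : IsLAR n v H h)
    (lam : ℚ) (hlam0 : 0 < lam) (hlam1 : lam < 1)
    (h' : Fin n → ℕ) (hh' : ∀ i, (h' i : ℚ) = lam * (h i : ℚ))
    (H' : ℕ) (hH' : (H' : ℚ) = lam * (H : ℚ)) :
    IsLAR n v H' h' := by
  obtain ⟨hsum, hfloor, hlarge⟩ := happ
  set V := ∑ j, v j with hVdef
  have hql0 : (0:ℝ) < (lam:ℝ) := by exact_mod_cast hlam0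
  have hql1 : ((lam:ℝ)) < 1 := by exact_mod_cast hlam1
  have hH'R : (H' : ℝ) = (lam:ℝ) * (H : ℝ) := by exact_mod_cast hH'
  have hh'R : ∀ i, (h' i : ℝ) = (lam:ℝ) * (h i : ℝ) := by
    intro i; exact_mod_cast hh' i
  have hq' : ∀ i, quota n v H' i = (lam:ℝ) * quota n v H i := by
    intro i
    unfold quota
    rw [hH'R]; ring
  -- per-state key lemma
  have key : ∀ i,
      ((h i : ℤ) = ⌊quota n v H i⌋ ∧ (h' i : ℤ) = ⌊quota n v H' i⌋) ∨
      ((¬(∃ z : ℤ, quota n v H i = (z : ℝ))) ∧ (h i : ℤ) = ⌊quota n v H i⌋ + 1 ∧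
        (¬(∃ z : ℤ, quota n v H' i = (z : ℝ))) ∧ (h' i : ℤ) = ⌊quota n v H' i⌋ + 1) := by
    intro i
    set x := quota n v H i with hxdef
    rcases hfloor i with hc | ⟨hni, hc⟩
    · left
      refine ⟨hc, ?_⟩
      have hle : ((h i : ℤ) : ℝ) ≤ x := by rw [hc]; exact Int.floor_le x
      have hlt : x < ((h i : ℤ) : ℝ) + 1 := by rw [hc]; exact Int.lt_floor_add_one x
      push_cast at hle hlt
      symm
      rw [Int.floor_eq_iff]
      constructor
      · push_cast
        rw [hq' i, hh'R i]
        nlinarith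
      · push_cast
        rw [hq' i, hh'R i]
        nlinarith
    · right
      have hle : ((⌊x⌋ : ℤ) : ℝ) ≤ x := Int.floor_le x
      have hne : x ≠ ((⌊x⌋ : ℤ) : ℝ) := by
        intro hx; exact hni ⟨⌊x⌋, hx⟩
      have hlt2 : x < ((h i : ℤ) : ℝ) := by
        have := Int.lt_floor_add_one x
        rw [hc]; push_cast; push_cast at this; linarith
      have hgt : ((h i : ℤ) : ℝ) - 1 < x := by
        rw [hc]; push_cast
        rcases lt_or_eq_of_le hle with hh | hh
        · linarith
        · exact absurd hh.symm hne
      push_cast at hlt2 hgt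
      -- strict bounds for the scaled quota
      have hb1 : (h' i : ℝ) - 1 < quota n v H' i := by
        rw [hq' i, hh'R i]; nlinarith
      have hb2 : quota n v H' i < (h' i : ℝ) := by
        rw [hq' i, hh'R i]; nlinarith
      have hni' : ¬(∃ z : ℤ, quota n v H' i = (z : ℝ)) := by
        rintro ⟨z, hz⟩
        rw [hz] at hb1 hb2
        have h1 : z < (h' i : ℤ) := by exact_mod_cast hb2
        have h2 : ((h' i : ℕ) : ℝ) < (z : ℝ) + 1 := by linarith
        have h3 : (h' i : ℤ) < z + 1 := by exact_mod_cast h2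
        omega
      refine ⟨hni, hc, hni', ?_⟩
      have : ⌊quota n v H' i⌋ = (h' i : ℤ) - 1 := by
        rw [Int.floor_eq_iff]
        constructor
        · push_cast; linarith
        · push_cast; linarith
      omega
  refine ⟨?_, ?_, ?_⟩
  · -- sum
    have hQ : ((∑ i, h' i : ℕ) : ℚ) = ((H' : ℕ) : ℚ) := by
      push_cast
      rw [Finset.sum_congr rfl (fun i _ => hh' i), ← Finset.mul_sum, hH']
      congr 1
      exact_mod_cast hsum
    exact_mod_cast hQ
  · intro i
    rcases key i with ⟨_, h1⟩ | ⟨_, _, h2, h3⟩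
    · exact Or.inl h1
    · exact Or.inr ⟨h2, h3⟩
  · intro i j hni' hfi hfj
    rcases key i with ⟨hi1, _⟩ | ⟨_, _, _, hi2'⟩
    · rcases key j with ⟨_, hj1'⟩ | ⟨hnj, hj2, _, _⟩
      · omega
      · -- need : quota n v H i is not an integer
        have hniq : ¬(∃ z : ℤ, quota n v H i = (z : ℝ)) := by
          rintro ⟨z, hz⟩
          apply hni'
          refine ⟨(h' i : ℤ), ?_⟩
          have hz' : ⌊quota n v H i⌋ = z := by rw [hz]; exact Int.floor_intCast z
          have : (h i : ℤ) = z := by rw [hi1, hz']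
          have hxi : quota n v H i = ((h i : ℤ) : ℝ) := by rw [this, hz]
          rw [hq' i, hxi]
          push_cast
          linarith [hh'R i]
        exact hlarge i j hniq hi1 hj2
    · omega
end

section
/- Let v_1, ..., v_n > 0 be real numbers with total V, let H be a positive integer, and let h be an SML apportionment of H for v with quotas q_i = H·v_i/V. Let λ ∈ (0,1) be rational such that λ·h_i is an integer for every i. Then λh is an SML apportionment of λH for v (whose quotas are λq_i). (The Small method is proportionally consistent.) -/
/-- `h` is a SML (Small method) apportionment of `H` for `v`: the `h i` sum to `H`,
each state receives `⌊q i⌋` seats or (if `q i` is not an integer) `⌊q i⌋ + 1` seats,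
and the extra seats go one each to the smallest states whose quotas are not integers. -/
def IsSML (n : ℕ) (v : Fin n → ℝ) (H : ℕ) (h : Fin n → ℕ) : Prop :=
  (∑ i, h i = H) ∧
  (∀ i, (h i : ℤ) = ⌊quota n v H i⌋ ∨
    (¬(∃ z : ℤ, quota n v H i = (z : ℝ)) ∧ (h i : ℤ) = ⌊quota n v H i⌋ + 1)) ∧
  (∀ i j, ¬(∃ z : ℤ, quota n v H i = (z : ℝ)) → (h i : ℤ) = ⌊quota n v H i⌋ →
    (h j : ℤ) = ⌊quota n v H j⌋ + 1 → v j ≤ v i)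

/-- The Small method is proportionally consistent: if `h` is an SML apportionment
of `H` for `v` and `λ ∈ (0,1)` is rational with every `λ·h i` an integer
(witnessed by `h'`, with `λH = H'`), then `λh = h'` is an SML apportionment of `λH`. -/
theorem stmt_11 (n : ℕ)
    (v : Fin n → ℝ) (hv : ∀ i, 0 < v i)
    (H : ℕ) (hH : 0 < H)
    (h : Fin n → ℕ) (happ : IsSML n v H h)
    (lam : ℚ) (hlam0 : 0 < lam) (hlam1 : lam < 1)
    (h' : Fin n → ℕ) (hh' : ∀ i, (h' i : ℚ) = lam * (h i : ℚ))
    (H' : ℕ) (hH' : (H' : ℚ) = lam * (H : ℚ)) :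
    IsSML n v H' h' := by
  obtain ⟨hsum, hfloor, hmin⟩ := happ
  have hl0 : (0:ℝ) < (lam:ℝ) := by exact_mod_cast hlam0
  have hl1 : (lam:ℝ) < 1 := by exact_mod_cast hlam1
  have hHr : (H' : ℝ) = (lam:ℝ) * H := by exact_mod_cast hH'
  have hhr : ∀ i, (h' i : ℝ) = (lam:ℝ) * h i := by
    intro i; exact_mod_cast hh' i
  have hq : ∀ i, quota n v H' i = (lam:ℝ) * quota n v H i := by
    intro i; unfold quota; rw [hHr]; ring
  have key : ∀ i, ((h i : ℤ) = ⌊quota n v H i⌋ ∧ (h' i : ℤ) = ⌊quota n v H' i⌋) ∨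
      ((¬∃ z : ℤ, quota n v H i = (z:ℝ)) ∧ (h i : ℤ) = ⌊quota n v H i⌋ + 1 ∧
       (¬∃ z : ℤ, quota n v H' i = (z:ℝ)) ∧ (h' i : ℤ) = ⌊quota n v H' i⌋ + 1) := by
    intro i
    set q := quota n v H i with hqdef
    set q' := quota n v H' i with hq'def
    have hq'eq : q' = (lam:ℝ) * q := hq i
    rcases hfloor i with hi | ⟨hni, hi⟩
    · left
      refine ⟨hi, ?_⟩
      have hcast : ((h i : ℝ)) = ((⌊q⌋ : ℤ) : ℝ) := by exact_mod_cast congrArg (fun z : ℤ => (z : ℝ)) hi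
      have h1 : (h i : ℝ) ≤ q := by rw [hcast]; exact Int.floor_le q
      have h2 : q < (h i : ℝ) + 1 := by rw [hcast]; exact Int.lt_floor_add_one q
      symm
      rw [Int.floor_eq_iff]
      constructor
      · push_cast
        rw [hhr i, hq'eq]
        nlinarith
      · push_cast
        rw [hhr i, hq'eq]
        nlinarith
    · right
      have hcast : ((h i : ℝ)) = ((⌊q⌋ : ℤ) : ℝ) + 1 := by exact_mod_cast congrArg (fun z : ℤ => (z : ℝ)) hi
      have hfl : ((⌊q⌋ : ℤ) : ℝ) < q := by
        rcases lt_or_eq_of_le (Int.floor_le q) with hlt | heq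
        · exact hlt
        · exact absurd ⟨⌊q⌋, heq.symm⟩ hni
      have h1 : q < (h i : ℝ) := by rw [hcast]; exact Int.lt_floor_add_one q
      have h2 : (h i : ℝ) < q + 1 := by rw [hcast]; linarith
      have h1' : q' < (h' i : ℝ) := by
        rw [hhr i, hq'eq]; nlinarith
      have h2' : (h' i : ℝ) < q' + 1 := by
        rw [hhr i, hq'eq]; nlinarith
      have hfl' : ⌊q'⌋ = (h' i : ℤ) - 1 := by
        rw [Int.floor_eq_iff]
        constructor
        · push_cast; linarith
        · push_cast; linarith
      have hni' : ¬∃ z : ℤ, q' = (z:ℝ) := by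
        rintro ⟨z, hz⟩
        have hz1 : (z:ℝ) < (h' i : ℝ) := by rw [← hz]; exact h1'
        have hz2 : ((h' i : ℕ) : ℝ) < (z:ℝ) + 1 := by rw [← hz]; exact h2'
        have hz1' : z < (h' i : ℤ) := by exact_mod_cast hz1
        have hz2' : ((h' i : ℕ) : ℤ) < z + 1 := by exact_mod_cast hz2
        omega
      exact ⟨hni, hi, hni', by omega⟩
  refine ⟨?_, ?_, ?_⟩
  · have hQ : (∑ i, (h' i : ℚ)) = (H' : ℚ) := by
      rw [hH']
      have : (∑ i, (h' i : ℚ)) = ∑ i, lam * (h i : ℚ) := by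
        exact Finset.sum_congr rfl fun i _ => hh' i
      rw [this, ← Finset.mul_sum]
      congr 1
      exact_mod_cast congrArg (Nat.cast (R := ℚ)) hsum
    exact_mod_cast hQ
  · intro i
    rcases key i with ⟨_, hk⟩ | ⟨_, _, hk1, hk2⟩
    · exact Or.inl hk
    · exact Or.inr ⟨hk1, hk2⟩
  · intro i j hqi' hi' hj'
    rcases key i with ⟨hki, _⟩ | ⟨_, _, _, hki'⟩
    · rcases key j with ⟨_, hkj'⟩ | ⟨_, hkj, _, _⟩
      · omega
      · have hnqi : ¬∃ z : ℤ, quota n v H i = (z:ℝ) := by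
          rintro ⟨z, hz⟩
          apply hqi'
          refine ⟨(h' i : ℤ), ?_⟩
          have hfz : ⌊quota n v H i⌋ = z := by rw [hz]; exact Int.floor_intCast z
          have hhz : (h i : ℝ) = (z : ℝ) := by
            have : (h i : ℤ) = z := by rw [hki, hfz]
            exact_mod_cast this
          rw [hq i, hz, ← hhz, ← hhr i]
          norm_cast
        exact hmin i j hnqi hki hkj
    · omega
end

section
/- Let v_1 ≥ v_2 ≥ ... ≥ v_n > 0 be real numbers with total V, let H be a positive integer, and let h = LQE(v, H) be the Lower Quota Extremes apportionment, i.e., h_i = ⌊q_i⌋ for all i ≥ 2 and h_1 = H − Σ_{i ≥ 2} ⌊q_i⌋, where q_i = H·v_i/V. Let λ ∈ (0,1) be rational such that λ·h_i is an integer for every i. Then LQE(v, λH) = λh. (The LQE method is proportionally consistent.) -/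
/-- `h` is the Lower Quota Extremes (LQE) apportionment of `H` for `v` (with state
`0` the largest): every state other than state `0` receives `⌊q i⌋` seats, and state
`0` receives all remaining seats (so the `h i` sum to `H`). -/
def IsLQE (n : ℕ) (hn : 0 < n) (v : Fin n → ℝ) (H : ℕ) (h : Fin n → ℕ) : Prop :=
  (∑ i, h i = H) ∧
  (∀ i : Fin n, i ≠ ⟨0, hn⟩ → (h i : ℤ) = ⌊quota n v H i⌋)

/-- The LQE method is proportionally consistent: for populations
`v 0 ≥ v 1 ≥ ⋯ ≥ v (n-1) > 0`, if `h = LQE(v, H)` and `λ ∈ (0,1)` is rational with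
every `λ·h i` an integer (witnessed by `h'`, with `λH = H'`), then
`LQE(v, λH) = λh`, i.e. `h'` is the LQE apportionment of `λH`. -/
theorem stmt_12 (n : ℕ) (hn : 0 < n)
    (v : Fin n → ℝ) (hv : ∀ i, 0 < v i)
    (hsort : ∀ i j : Fin n, i ≤ j → v j ≤ v i)
    (H : ℕ) (hH : 0 < H)
    (h : Fin n → ℕ) (happ : IsLQE n hn v H h)
    (lam : ℚ) (hlam0 : 0 < lam) (hlam1 : lam < 1)
    (h' : Fin n → ℕ) (hh' : ∀ i, (h' i : ℚ) = lam * (h i : ℚ))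
    (H' : ℕ) (hH' : (H' : ℚ) = lam * (H : ℚ)) :
    IsLQE n hn v H' h' := by
  obtain ⟨hsum, hfl⟩ := happ
  constructor
  · have : ((∑ i, h' i : ℕ) : ℚ) = ((H' : ℕ) : ℚ) := by
      push_cast
      rw [hH', ← hsum]
      push_cast
      rw [Finset.mul_sum]
      exact Finset.sum_congr rfl fun i _ => hh' i
    exact_mod_cast this
  · intro i hi
    have hfloor := hfl i hi
    have hq : quota n v H' i = (lam : ℝ) * quota n v H i := by
      unfold quota
      have hHr : (H' : ℝ) = (lam : ℝ) * (H : ℝ) := by exact_mod_cast hH'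
      rw [hHr]; ring
    have hhr : (h' i : ℝ) = (lam : ℝ) * (h i : ℝ) := by exact_mod_cast hh' i
    have hle : (h i : ℝ) ≤ quota n v H i := by
      have := Int.floor_le (quota n v H i)
      rw [← hfloor] at this; exact_mod_cast this
    have hlt : quota n v H i < (h i : ℝ) + 1 := by
      have := Int.lt_floor_add_one (quota n v H i)
      rw [← hfloor] at this; exact_mod_cast this
    have hlamr0 : (0 : ℝ) < (lam : ℝ) := by exact_mod_cast hlam0
    have hlamr1 : (lam : ℝ) < 1 := by exact_mod_cast hlam1
    symm
    rw [Int.floor_eq_iff]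
    constructor
    · rw [hq]
      push_cast
      rw [hhr]
      exact mul_le_mul_of_nonneg_left hle hlamr0.le
    · rw [hq]
      push_cast
      rw [hhr]
      calc (lam : ℝ) * quota n v H i < (lam : ℝ) * ((h i : ℝ) + 1) := by
            exact mul_lt_mul_of_pos_left hlt hlamr0
        _ = (lam : ℝ) * (h i : ℝ) + (lam : ℝ) := by ring
        _ < (lam : ℝ) * (h i : ℝ) + 1 := by linarith
end

section
/- Let v_1 ≥ v_2 ≥ ... ≥ v_n > 0 be real numbers with total V, let H be a positive integer, and let h be the SUQ apportionment of H for v, i.e., there is an index k such that h_i = ⌈q_i⌉ for i < k, h_k = H − Σ_{i < k} ⌈q_i⌉ with 0 ≤ h_k ≤ ⌈q_k⌉, and h_i = 0 for i > k, where q_i = H·v_i/V. Let λ ∈ (0,1) be rational such that λ·h_i is an integer for every i. Then λh is the SUQ apportionment of λH for v. (The Sequential Upper Quota method is proportionally consistent.) -/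
/-- `h` is the Sequential Upper Quota (SUQ) apportionment of `H` for `v` (states in
descending order of size): there is an index `k` with `h i = ⌈q i⌉` for `i < k`,
`h k = H − Σ_{i < k} ⌈q i⌉` with `0 ≤ h k ≤ ⌈q k⌉`, and `h i = 0` for `i > k`. -/
def IsSUQ (n : ℕ) (v : Fin n → ℝ) (H : ℕ) (h : Fin n → ℕ) : Prop :=
  (∑ i, h i = H) ∧
  ∃ k : Fin n,
    (∀ i, i < k → (h i : ℤ) = ⌈quota n v H i⌉) ∧
    (h k : ℤ) = (H : ℤ) - ∑ i ∈ Finset.univ.filter (· < k), ⌈quota n v H i⌉ ∧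
    (h k : ℤ) ≤ ⌈quota n v H k⌉ ∧
    (∀ i, k < i → h i = 0)

lemma ceil_scale (lam : ℚ) (h0 : 0 < lam) (h1 : lam < 1) (q : ℝ) (m m' : ℤ)
    (hm : (m : ℝ) - 1 < q) (hq : q ≤ m) (hm' : (m' : ℝ) = (lam : ℝ) * m) :
    ⌈(lam : ℝ) * q⌉ = m' := by
  have h0R : (0 : ℝ) < (lam : ℝ) := by exact_mod_cast h0
  have h1R : ((lam : ℝ)) < 1 := by exact_mod_cast h1
  rw [Int.ceil_eq_iff]
  constructor
  · have := mul_lt_mul_of_pos_left hm h0R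
    nlinarith
  · rw [hm']
    exact mul_le_mul_of_nonneg_left hq h0R.le

/-- The Sequential Upper Quota method is proportionally consistent: for populations
`v 0 ≥ v 1 ≥ ⋯ ≥ v (n-1) > 0`, if `h` is the SUQ apportionment of `H` and
`λ ∈ (0,1)` is rational with every `λ·h i` an integer (witnessed by `h'`, with
`λH = H'`), then `λh = h'` is the SUQ apportionment of `λH`. -/
theorem stmt_13 (n : ℕ)
    (v : Fin n → ℝ) (hv : ∀ i, 0 < v i)
    (hsort : ∀ i j : Fin n, i ≤ j → v j ≤ v i)
    (H : ℕ) (hH : 0 < H)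
    (h : Fin n → ℕ) (happ : IsSUQ n v H h)
    (lam : ℚ) (hlam0 : 0 < lam) (hlam1 : lam < 1)
    (h' : Fin n → ℕ) (hh' : ∀ i, (h' i : ℚ) = lam * (h i : ℚ))
    (H' : ℕ) (hH' : (H' : ℚ) = lam * (H : ℚ)) :
    IsSUQ n v H' h' := by
  obtain ⟨hsum, k, hk1, hk2, hk3, hk4⟩ := happ
  have h0R : (0 : ℝ) < (lam : ℝ) := by exact_mod_cast hlam0
  have h1R : ((lam : ℝ)) < 1 := by exact_mod_cast hlam1
  have hH'R : (H' : ℝ) = (lam : ℝ) * H := by exact_mod_cast hH'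
  have hq' : ∀ i, quota n v H' i = (lam : ℝ) * quota n v H i := by
    intro i; unfold quota; rw [hH'R]; ring
  have hh'R : ∀ i, (h' i : ℝ) = (lam : ℝ) * (h i : ℝ) := by
    intro i; exact_mod_cast hh' i
  -- ceilings for i < k
  have hceil : ∀ i, i < k → ((h' i : ℤ) : ℤ) = ⌈quota n v H' i⌉ := by
    intro i hi
    rw [hq' i]
    symm
    apply ceil_scale lam hlam0 hlam1 _ ⌈quota n v H i⌉ (h' i)
    · have := Int.ceil_lt_add_one (quota n v H i); linarith
    · exact Int.le_ceil _
    · rw [← hk1 i hi]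
      push_cast
      exact hh'R i
  -- total sum
  have hsum' : ∑ i, h' i = H' := by
    have : ((∑ i, h' i : ℕ) : ℚ) = ((H' : ℕ) : ℚ) := by
      push_cast
      rw [hH']
      calc ∑ i, (h' i : ℚ) = ∑ i, lam * (h i : ℚ) := by
            exact Finset.sum_congr rfl fun i _ => hh' i
        _ = lam * ∑ i, (h i : ℚ) := by rw [Finset.mul_sum]
        _ = lam * (H : ℚ) := by
            congr 1
            exact_mod_cast congrArg (Nat.cast (R := ℚ)) hsum
    exact_mod_cast this
  refine ⟨hsum', k, fun i hi => hceil i hi, ?_, ?_, ?_⟩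
  · -- h' k = H' - ∑_{i<k} ⌈q' i⌉
    have hrw : ∑ i ∈ Finset.univ.filter (· < k), ⌈quota n v H' i⌉
        = ∑ i ∈ Finset.univ.filter (· < k), ((h' i : ℤ)) := by
      refine Finset.sum_congr rfl fun i hi => ?_
      exact ((hceil i (Finset.mem_filter.mp hi).2)).symm
    rw [hrw]
    -- know in ℤ : h k + ∑_{i<k} h i = H
    have hZ : (h k : ℤ) + ∑ i ∈ Finset.univ.filter (· < k), ((h i : ℤ)) = (H : ℤ) := by
      have hrw2 : ∑ i ∈ Finset.univ.filter (· < k), ⌈quota n v H i⌉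
          = ∑ i ∈ Finset.univ.filter (· < k), ((h i : ℤ)) := by
        refine Finset.sum_congr rfl fun i hi => ?_
        exact (hk1 i (Finset.mem_filter.mp hi).2).symm
      rw [hrw2] at hk2
      linarith
    -- in ℚ : h' k + ∑_{i<k} h' i = H'
    have hQ : (h' k : ℚ) + ∑ i ∈ Finset.univ.filter (· < k), ((h' i : ℚ)) = (H' : ℚ) := by
      rw [hH', hh' k]
      have : ∑ i ∈ Finset.univ.filter (· < k), ((h' i : ℚ))
          = lam * ∑ i ∈ Finset.univ.filter (· < k), ((h i : ℚ)) := by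
        rw [Finset.mul_sum]
        exact Finset.sum_congr rfl fun i _ => hh' i
      rw [this, ← mul_add]
      congr 1
      exact_mod_cast hZ
    have : ((h' k : ℤ) : ℚ) + ∑ i ∈ Finset.univ.filter (· < k), (((h' i : ℤ)) : ℚ)
        = ((H' : ℤ) : ℚ) := by push_cast; push_cast at hQ; linarith [hQ]
    have hZ' : (h' k : ℤ) + ∑ i ∈ Finset.univ.filter (· < k), ((h' i : ℤ)) = (H' : ℤ) := by
      exact_mod_cast this
    linarith
  · -- h' k ≤ ⌈q' k⌉
    rw [hq' k]
    have hck : ((h k : ℕ) : ℝ) - 1 < quota n v H k := by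
      have hle : ((h k : ℕ) : ℝ) ≤ (⌈quota n v H k⌉ : ℝ) := by exact_mod_cast hk3
      have := Int.ceil_lt_add_one (quota n v H k)
      linarith
    have h1 : (((h' k : ℤ) - 1 : ℤ) : ℝ) < (lam : ℝ) * quota n v H k := by
      have hmul := mul_lt_mul_of_pos_left hck h0R
      have hh'k := hh'R k
      push_cast
      nlinarith
    have h2 := Int.lt_ceil.mpr h1
    omega
  · intro i hi
    have h0 : h i = 0 := hk4 i hi
    have : (h' i : ℚ) = 0 := by rw [hh' i, h0]; simp
    exact_mod_cast this
end

section
/- Let q_1, ..., q_n be positive real numbers with q_1 + ... + q_n = H for a positive integer H, let h be a vector of nonnegative integers with h_1 + ... + h_n = H, and let λ ∈ (0,1) be rational such that λ·h_i is an integer for every i. Then: (i) if [q_i] = h_i for all i, then Σ_i [λq_i] = λH; (ii) if [q_i] ≥ h_i for all i and Σ_i [q_i] = H + c for some integer c > 0, then λH ≤ Σ_i [λq_i] ≤ λH + c; if [q_i] ≤ h_i for all i and Σ_i [q_i] = H − c for some integer c > 0, then λH − c ≤ Σ_i [λq_i] ≤ λH; and in both cases of (ii), if λ ≤ 1/(2k+1)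 where k is an integer with k ≥ max_i |[q_i] − h_i|, then Σ_i [λq_i] = λH. -/
/-!
Since `λ h i` is an integer, `[λ q i] = λ h i + [λ x i]` for the deviation `x i = q i - h i`,
and `[x i] = [q i] - h i`. Rounding is monotone and `λ x i` lies between `0` and `x i`, so
`[λ x i]` lies between `0` and `[x i]`; summing gives the bounds in (ii). If `|[x i]| ≤ k` then
`x i ∈ [-k - 1/2, k + 1/2)`, so `λ (2k+1) ≤ 1` puts `λ x i` in `[-1/2, 1/2)` and `[λ x i] = 0`;
this gives the exact equalities, (i) being the case `k = 0`.
-/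

open Finset

section round

variable {α : Type*} [Field α] [LinearOrder α] [IsStrictOrderedRing α] [FloorRing α]

theorem round_mono : Monotone (round : α → ℤ) := fun x y hxy => by
  simpa only [round_eq] using Int.floor_mono (by linarith)

theorem round_mul_mem_uIcc {t : α} (ht0 : 0 ≤ t) (ht1 : t ≤ 1) (x : α) :
    round (t * x) ∈ Set.uIcc 0 (round x) := by
  rcases le_total 0 x with hx | hx
  · rw [Set.uIcc_of_le (round_zero (α := α) ▸ round_mono hx)]
    exact ⟨round_zero (α := α) ▸ round_mono (mul_nonneg ht0 hx),
      round_mono (mul_le_of_le_one_left hx ht1)⟩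
  · rw [Set.uIcc_of_ge (round_zero (α := α) ▸ round_mono hx)]
    exact ⟨round_mono (le_mul_of_le_one_left hx ht1),
      round_zero (α := α) ▸ round_mono (mul_nonpos_of_nonneg_of_nonpos ht0 hx)⟩

theorem round_mul_eq_zero {t x : α} {k : ℤ} (ht : 0 < t) (hk : |round x| ≤ k)
    (htk : t ≤ 1 / (2 * k + 1)) : round (t * x) = 0 := by
  have hk' : |(round x : α)| ≤ k := by exact_mod_cast hk
  have hk0 : (0 : α) ≤ k := (abs_nonneg _).trans hk'
  obtain ⟨hlo, hhi⟩ := round_eq_iff.mp (rfl : round x = round x)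
  rw [le_div_iff₀ (by linarith)] at htk
  obtain ⟨hlo', hhi'⟩ := abs_le.mp hk'
  rw [round_eq_zero_iff]
  constructor <;> nlinarith

variable {ι : Type*} (s : Finset ι) {t : α}

theorem sum_round_mul_eq_sum_round_mul_sub_add (x a : ι → α) {m : ι → ℤ}
    (hm : ∀ i ∈ s, t * a i = m i) :
    ∑ i ∈ s, round (t * x i) = ∑ i ∈ s, round (t * (x i - a i)) + ∑ i ∈ s, m i := by
  rw [← sum_add_distrib]
  refine sum_congr rfl fun i hi => ?_
  rw [← round_add_intCast, ← hm i hi, mul_sub, sub_add_cancel]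

theorem sum_round_mul_mem_Icc_of_nonneg (ht0 : 0 ≤ t) (ht1 : t ≤ 1) (x : ι → α)
    (hx : ∀ i ∈ s, 0 ≤ round (x i)) :
    ∑ i ∈ s, round (t * x i) ∈ Set.Icc 0 (∑ i ∈ s, round (x i)) := by
  have hmem i (hi : i ∈ s) := Set.uIcc_of_le (hx i hi) ▸ round_mul_mem_uIcc ht0 ht1 (x i)
  exact ⟨sum_nonneg fun i hi => (hmem i hi).1, sum_le_sum fun i hi => (hmem i hi).2⟩

theorem sum_round_mul_mem_Icc_of_nonpos (ht0 : 0 ≤ t) (ht1 : t ≤ 1) (x : ι → α)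
    (hx : ∀ i ∈ s, round (x i) ≤ 0) :
    ∑ i ∈ s, round (t * x i) ∈ Set.Icc (∑ i ∈ s, round (x i)) 0 := by
  have hmem i (hi : i ∈ s) := Set.uIcc_of_ge (hx i hi) ▸ round_mul_mem_uIcc ht0 ht1 (x i)
  exact ⟨sum_le_sum fun i hi => (hmem i hi).1, sum_nonpos fun i hi => (hmem i hi).2⟩

end round

theorem stmt_14_general (n : ℕ) (H : ℕ)
    (q : Fin n → ℝ)
    (h : Fin n → ℕ) (hsum : ∑ i, h i = H)
    (lam : ℚ) (hlam0 : 0 < lam) (hlam1 : lam < 1)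
    (hint : ∀ i, ∃ m : ℕ, (m : ℚ) = lam * (h i : ℚ))
    (H' : ℕ) (hH' : (H' : ℚ) = lam * (H : ℚ)) :
    ((∀ i, round (q i) = (h i : ℤ)) → ∑ i, round ((lam : ℝ) * q i) = (H' : ℤ)) ∧
    (∀ c : ℤ, 0 < c → (∀ i, (h i : ℤ) ≤ round (q i)) →
      ∑ i, round (q i) = (H : ℤ) + c →
      ((H' : ℤ) ≤ ∑ i, round ((lam : ℝ) * q i) ∧
        ∑ i, round ((lam : ℝ) * q i) ≤ (H' : ℤ) + c) ∧
      (∀ k : ℤ, (∀ i, |round (q i) - (h i : ℤ)| ≤ k) → lam ≤ 1 / (2 * (k : ℚ) + 1) →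
        ∑ i, round ((lam : ℝ) * q i) = (H' : ℤ))) ∧
    (∀ c : ℤ, 0 < c → (∀ i, round (q i) ≤ (h i : ℤ)) →
      ∑ i, round (q i) = (H : ℤ) - c →
      ((H' : ℤ) - c ≤ ∑ i, round ((lam : ℝ) * q i) ∧
        ∑ i, round ((lam : ℝ) * q i) ≤ (H' : ℤ)) ∧
      (∀ k : ℤ, (∀ i, |round (q i) - (h i : ℤ)| ≤ k) → lam ≤ 1 / (2 * (k : ℚ) + 1) →
        ∑ i, round ((lam : ℝ) * q i) = (H' : ℤ))) := by
  choose m hm using hint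
  have hlam0' : (0 : ℝ) < lam := by exact_mod_cast hlam0
  have hlam1' : (lam : ℝ) ≤ 1 := by exact_mod_cast hlam1.le
  have hH'_sum : ∑ i, (m i : ℤ) = H' := by
    have : ((∑ i, m i : ℕ) : ℚ) = H' := by
      rw [hH', ← hsum]
      push_cast
      simp_rw [hm, mul_sum]
    exact_mod_cast this
  have hshift : ∑ i, round ((lam : ℝ) * q i) = ∑ i, round ((lam : ℝ) * (q i - h i)) + H' := by
    rw [← hH'_sum]
    exact sum_round_mul_eq_sum_round_mul_sub_add _ _ _ fun i _ => by exact_mod_cast (hm i).symm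
  have hround_dev i : round (q i - h i) = round (q i) - h i := round_sub_natCast _ _
  have hsum_dev : ∑ i, round (q i - h i) = ∑ i, round (q i) - H := by
    simp only [hround_dev, sum_sub_distrib, ← hsum, Nat.cast_sum]
  have hsharp (k : ℤ) (hk : ∀ i, |round (q i) - h i| ≤ k) (hlk : lam ≤ 1 / (2 * (k : ℚ) + 1)) :
      ∑ i, round ((lam : ℝ) * q i) = H' := by
    rw [hshift, sum_eq_zero fun i _ => round_mul_eq_zero hlam0' ((hround_dev i).symm ▸ hk i)
      (by exact_mod_cast hlk), zero_add]
  refine ⟨fun hexact => hsharp 0 (fun i => by simp [hexact i]) (by simpa using hlam1.le),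
    fun c _ hge hc => ⟨?_, hsharp⟩, fun c _ hle hc => ⟨?_, hsharp⟩⟩
  · obtain ⟨hlo, hhi⟩ := sum_round_mul_mem_Icc_of_nonneg univ hlam0'.le hlam1'
      (fun i => q i - h i) fun i _ => by rw [hround_dev]; linarith [hge i]
    rw [hshift]
    constructor <;> linarith
  · obtain ⟨hlo, hhi⟩ := sum_round_mul_mem_Icc_of_nonpos univ hlam0'.le hlam1'
      (fun i => q i - h i) fun i _ => by rw [hround_dev]; linarith [hle i]
    rw [hshift]
    constructor <;> linarith

/-- Lemma on nearest-integer rounding of scaled quotas. Quotas `q i > 0` sum to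
`H`, `h` is an allocation of the `H` seats, `λ ∈ (0,1)` is rational with every
`λ·h i` an integer and `λH = H'`. Then:
(i) if `[q i] = h i` for all `i`, then `Σ [λ·q i] = λH`;
(ii) if `[q i] ≥ h i` for all `i` and `Σ [q i] = H + c` with `c > 0`, then
`λH ≤ Σ [λ·q i] ≤ λH + c`; if `[q i] ≤ h i` for all `i` and `Σ [q i] = H − c`
with `c > 0`, then `λH − c ≤ Σ [λ·q i] ≤ λH`; and in both cases, if
`λ ≤ 1/(2k+1)` where `k ≥ max_i |[q i] − h i|`, then `Σ [λ·q i] = λH`. -/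
theorem stmt_14 (n : ℕ) (H : ℕ) (hH : 0 < H)
    (q : Fin n → ℝ) (hq : ∀ i, 0 < q i) (hqsum : ∑ i, q i = (H : ℝ))
    (h : Fin n → ℕ) (hsum : ∑ i, h i = H)
    (lam : ℚ) (hlam0 : 0 < lam) (hlam1 : lam < 1)
    (hint : ∀ i, ∃ m : ℕ, (m : ℚ) = lam * (h i : ℚ))
    (H' : ℕ) (hH' : (H' : ℚ) = lam * (H : ℚ)) :
    ((∀ i, round (q i) = (h i : ℤ)) → ∑ i, round ((lam : ℝ) * q i) = (H' : ℤ)) ∧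
    (∀ c : ℤ, 0 < c → (∀ i, (h i : ℤ) ≤ round (q i)) →
      ∑ i, round (q i) = (H : ℤ) + c →
      ((H' : ℤ) ≤ ∑ i, round ((lam : ℝ) * q i) ∧
        ∑ i, round ((lam : ℝ) * q i) ≤ (H' : ℤ) + c) ∧
      (∀ k : ℤ, (∀ i, |round (q i) - (h i : ℤ)| ≤ k) → lam ≤ 1 / (2 * (k : ℚ) + 1) →
        ∑ i, round ((lam : ℝ) * q i) = (H' : ℤ))) ∧
    (∀ c : ℤ, 0 < c → (∀ i, round (q i) ≤ (h i : ℤ)) →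
      ∑ i, round (q i) = (H : ℤ) - c →
      ((H' : ℤ) - c ≤ ∑ i, round ((lam : ℝ) * q i) ∧
        ∑ i, round ((lam : ℝ) * q i) ≤ (H' : ℤ)) ∧
      (∀ k : ℤ, (∀ i, |round (q i) - (h i : ℤ)| ≤ k) → lam ≤ 1 / (2 * (k : ℚ) + 1) →
        ∑ i, round ((lam : ℝ) * q i) = (H' : ℤ))) :=
  stmt_14_general n H q h hsum lam hlam0 hlam1 hint H' hH'
end

section
/- Let v_1 ≥ v_2 ≥ ... ≥ v_n > 0 be real numbers with total V, let H be a positive integer, let q_i = H·v_i/V, and let h = NIE(v, H) be the Nearest-Integer Extremes apportionment. Let λ ∈ (0,1) be rational such that λ·h_i is an integer for every i. Then NIE(v, λH) = λh. (The NIE method is proportionally consistent.) -/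
/-- `h` is the Nearest-Integer Extremes (NIE) apportionment of `H` for `v`
(states in descending order of size, state `0` largest). Here `round` is
nearest-integer rounding `[·]`. If `Σ [q i] ≤ H`, state `0` receives
`[q 0] + (H − Σ [q i])` seats and every other state receives `[q i]` seats; if
`Σ [q i] > H`, the surplus is removed from the smallest states sequentially:
there is an index `k` with `h i = [q i]` for `i < k`,
`h k = H − Σ_{i < k} [q i]` with `0 ≤ h k ≤ [q k]`, and `h i = 0` for `i > k`. -/
def IsNIE (n : ℕ) (hn : 0 < n) (v : Fin n → ℝ) (H : ℕ) (h : Fin n → ℕ) : Prop :=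
  ((∑ i, round (quota n v H i)) ≤ (H : ℤ) ∧
    (h ⟨0, hn⟩ : ℤ) = round (quota n v H ⟨0, hn⟩) + ((H : ℤ) - ∑ i, round (quota n v H i)) ∧
    (∀ i : Fin n, i ≠ ⟨0, hn⟩ → (h i : ℤ) = round (quota n v H i))) ∨
  ((H : ℤ) < ∑ i, round (quota n v H i) ∧
    ∃ k : Fin n,
      (∀ i, i < k → (h i : ℤ) = round (quota n v H i)) ∧
      (h k : ℤ) = (H : ℤ) - ∑ i ∈ Finset.univ.filter (· < k), round (quota n v H i) ∧
      (h k : ℤ) ≤ round (quota n v H k) ∧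
      (∀ i, k < i → h i = 0))

lemma round_le'' (x : ℝ) : (round x : ℝ) ≤ x + 1/2 := by
  rw [round_eq]
  have := Int.floor_le (x + 1/2)
  linarith

lemma lt_round'' (x : ℝ) : x < (round x : ℝ) + 1/2 := by
  rw [round_eq]
  have := Int.lt_floor_add_one (x + 1/2)
  linarith

lemma round_nonneg'' {x : ℝ} (hx : 0 ≤ x) : 0 ≤ round x := by
  have h1 := lt_round'' x
  have h2 : (-1 : ℝ) < (round x : ℝ) := by linarith
  have h3 : (-1 : ℤ) < round x := by exact_mod_cast h2
  omega

lemma round_scale' {q lam : ℝ} {m : ℤ} (h0 : 0 < lam) (h1 : lam < 1)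
    (hm : (m : ℝ) = lam * (round q : ℝ)) : round (lam * q) = m := by
  have hr1 := round_le'' q
  have hr2 := lt_round'' q
  rw [round_eq, Int.floor_eq_iff]
  constructor
  · nlinarith
  · nlinarith

lemma round_scale_le' {q lam : ℝ} {m : ℤ} (h0 : 0 < lam) (h1 : lam < 1)
    (hm : lam * (round q : ℝ) ≤ (m : ℝ)) : round (lam * q) ≤ m := by
  have hr2 := lt_round'' q
  have h3 := round_le'' (lam * q)
  have h4 : (round (lam * q) : ℝ) < (m : ℝ) + 1 := by nlinarith
  have h5 : round (lam * q) < m + 1 := by exact_mod_cast h4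
  omega

lemma round_scale_ge' {q lam : ℝ} {m : ℤ} (h0 : 0 < lam) (h1 : lam < 1)
    (hm : (m : ℝ) ≤ lam * (round q : ℝ)) : m ≤ round (lam * q) := by
  have hr1 := round_le'' q
  have h3 := lt_round'' (lam * q)
  have h4 : (m : ℝ) - 1 < (round (lam * q) : ℝ) := by nlinarith
  have h5 : m - 1 < round (lam * q) := by exact_mod_cast h4
  omega

/-- The NIE method is proportionally consistent: for populations
`v 0 ≥ v 1 ≥ ⋯ ≥ v (n-1) > 0`, if `h = NIE(v, H)` and `λ ∈ (0,1)` is rational with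
every `λ·h i` an integer (witnessed by `h'`, with `λH = H'`), then
`NIE(v, λH) = λh`, i.e. `h'` is the NIE apportionment of `λH`. -/
theorem stmt_15 (n : ℕ) (hn : 0 < n)
    (v : Fin n → ℝ) (hv : ∀ i, 0 < v i)
    (hsort : ∀ i j : Fin n, i ≤ j → v j ≤ v i)
    (H : ℕ) (hH : 0 < H)
    (h : Fin n → ℕ) (happ : IsNIE n hn v H h)
    (lam : ℚ) (hlam0 : 0 < lam) (hlam1 : lam < 1)
    (h' : Fin n → ℕ) (hh' : ∀ i, (h' i : ℚ) = lam * (h i : ℚ))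
    (H' : ℕ) (hH' : (H' : ℚ) = lam * (H : ℚ)) :
    IsNIE n hn v H' h' := by
  classical
  set q0 : Fin n := ⟨0, hn⟩ with hq0
  have hVpos : (0 : ℝ) < ∑ j, v j :=
    Finset.sum_pos (fun i _ => hv i) ⟨q0, Finset.mem_univ _⟩
  have hlamR0 : (0 : ℝ) < (lam : ℝ) := by exact_mod_cast hlam0
  have hlamR1 : ((lam : ℝ)) < 1 := by exact_mod_cast hlam1
  have hhR : ∀ i, ((h' i : ℝ)) = (lam : ℝ) * (h i : ℝ) := fun i => by
    exact_mod_cast hh' i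
  have hHR : ((H' : ℝ)) = (lam : ℝ) * (H : ℝ) := by exact_mod_cast hH'
  have hq' : ∀ i, quota n v H' i = (lam : ℝ) * quota n v H i := by
    intro i
    unfold quota
    rw [hHR]
    ring
  have hqnn : ∀ i, (0 : ℝ) ≤ quota n v H' i := by
    intro i
    unfold quota
    exact div_nonneg (mul_nonneg (Nat.cast_nonneg _) (hv i).le) hVpos.le
  have hnn : ∀ i, (0 : ℤ) ≤ round (quota n v H' i) := fun i => round_nonneg'' (hqnn i)
  -- key: if h i matches the round at H, then h' i matches the round at H'
  have key : ∀ i : Fin n, (h i : ℤ) = round (quota n v H i) →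
      round (quota n v H' i) = (h' i : ℤ) := by
    intro i hi
    rw [hq' i]
    apply round_scale' hlamR0 hlamR1
    rw [← hi]
    push_cast
    exact hhR i
  -- Σ h = H implies Σ h' = H'
  have hsum'_of : (∑ i, (h i : ℤ)) = (H : ℤ) → (∑ i, (h' i : ℤ)) = (H' : ℤ) := by
    intro hs
    have hsQ : (∑ i, (h i : ℚ)) = (H : ℚ) := by exact_mod_cast hs
    have : (∑ i, (h' i : ℚ)) = (H' : ℚ) := by
      rw [hH', ← hsQ, Finset.mul_sum]
      exact Finset.sum_congr rfl fun i _ => hh' i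
    exact_mod_cast this
  rcases happ with ⟨hsum, h0eq, hrest⟩ | ⟨hsum, k, hlt, hkeq, hkle, hgt⟩
  · -- deficit case
    rw [← hq0] at h0eq
    simp only [← hq0] at hrest
    have herase : ∀ f : Fin n → ℤ, f q0 + ∑ i ∈ Finset.univ.erase q0, f i = ∑ i, f i :=
      fun f => Finset.add_sum_erase _ f (Finset.mem_univ q0)
    have heraseh : ∑ i ∈ Finset.univ.erase q0, (h i : ℤ)
        = ∑ i ∈ Finset.univ.erase q0, round (quota n v H i) :=
      Finset.sum_congr rfl fun i hi => hrest i (Finset.ne_of_mem_erase hi)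
    have hsumh : (∑ i, (h i : ℤ)) = (H : ℤ) := by
      rw [← herase (fun i => (h i : ℤ))]
      rw [heraseh, h0eq]
      have := herase (fun i => round (quota n v H i))
      linarith
    have hsumh' := hsum'_of hsumh
    have h0ge : round (quota n v H q0) ≤ (h q0 : ℤ) := by
      rw [h0eq]; omega
    have hround0 : round (quota n v H' q0) ≤ (h' q0 : ℤ) := by
      rw [hq' q0]
      apply round_scale_le' hlamR0 hlamR1
      have h1 : ((round (quota n v H q0) : ℝ)) ≤ (h q0 : ℝ) := by exact_mod_cast h0ge
      have h2 := mul_le_mul_of_nonneg_left h1 hlamR0.le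
      push_cast
      rw [hhR q0]
      exact h2
    have herase' : ∑ i ∈ Finset.univ.erase q0, round (quota n v H' i)
        = ∑ i ∈ Finset.univ.erase q0, (h' i : ℤ) :=
      Finset.sum_congr rfl fun i hi => key i (hrest i (Finset.ne_of_mem_erase hi))
    have hsplit := herase (fun i => round (quota n v H' i))
    have hsplit' := herase (fun i => (h' i : ℤ))
    rw [herase'] at hsplit
    have hS : (∑ i, round (quota n v H' i)) ≤ (H' : ℤ) := by linarith
    refine Or.inl ⟨hS, ?_, fun i hi => (key i (hrest i hi)).symm⟩
    linarith
  · -- surplus case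
    set S : Finset (Fin n) := Finset.univ.filter (· < k) with hSdef
    set T : Finset (Fin n) := Finset.univ.filter (k < ·) with hTdef
    have htri : ∀ f : Fin n → ℤ, (∑ i, f i) = (∑ i ∈ S, f i) + f k + ∑ i ∈ T, f i := by
      intro f
      have hsplit := Finset.sum_filter_add_sum_filter_not Finset.univ (· < k) f
      have hset : Finset.univ.filter (fun i => ¬ i < k) = insert k T := by
        ext i
        simp only [Finset.mem_filter, Finset.mem_univ, true_and, Finset.mem_insert, hTdef,
          Fin.lt_def, Fin.ext_iff]
        omega
      rw [hset, Finset.sum_insert (by simp [hTdef])] at hsplit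
      rw [← hsplit, hSdef]
      ring
    have hSh : ∀ i ∈ S, (h i : ℤ) = round (quota n v H i) := by
      intro i hi
      exact hlt i (by simpa [hSdef] using hi)
    have hSsum : ∑ i ∈ S, round (quota n v H' i) = ∑ i ∈ S, (h' i : ℤ) :=
      Finset.sum_congr rfl fun i hi => key i (hSh i hi)
    -- value of h' k
    have hkQ : (h k : ℚ) = (H : ℚ) - ∑ i ∈ S, (h i : ℚ) := by
      have h1 : ((h k : ℤ) : ℚ) = ((H : ℤ) : ℚ)
          - ∑ i ∈ S, ((round (quota n v H i) : ℤ) : ℚ) := by exact_mod_cast hkeq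
      have h2 : ∑ i ∈ S, ((round (quota n v H i) : ℤ) : ℚ) = ∑ i ∈ S, (h i : ℚ) :=
        Finset.sum_congr rfl fun i hi => by exact_mod_cast (hSh i hi).symm
      rw [h2] at h1
      exact_mod_cast h1
    have hk' : (h' k : ℤ) = (H' : ℤ) - ∑ i ∈ S, (h' i : ℤ) := by
      have : (h' k : ℚ) = (H' : ℚ) - ∑ i ∈ S, (h' i : ℚ) := by
        rw [hh' k, hkQ, hH', mul_sub]
        congr 1
        rw [Finset.mul_sum]
        exact Finset.sum_congr rfl fun i _ => (hh' i).symm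
      exact_mod_cast this
    have hkle' : (h' k : ℤ) ≤ round (quota n v H' k) := by
      rw [hq' k]
      apply round_scale_ge' hlamR0 hlamR1
      have h1 : ((h k : ℝ)) ≤ (round (quota n v H k) : ℝ) := by exact_mod_cast hkle
      have h2 := mul_le_mul_of_nonneg_left h1 hlamR0.le
      push_cast
      rw [hhR k]
      exact h2
    have hz : ∀ i, k < i → h' i = 0 := by
      intro i hi
      have := hh' i
      rw [hgt i hi] at this
      simpa using this
    have hTnn : (0 : ℤ) ≤ ∑ i ∈ T, round (quota n v H' i) :=
      Finset.sum_nonneg fun i _ => hnn i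
    have htriR := htri (fun i => round (quota n v H' i))
    have hge : (H' : ℤ) ≤ ∑ i, round (quota n v H' i) := by
      rw [htriR, hSsum]
      linarith
    by_cases hc : (H' : ℤ) < ∑ i, round (quota n v H' i)
    · refine Or.inr ⟨hc, k, fun i hi => (key i (hlt i hi)).symm, ?_, hkle', hz⟩
      rw [← hSdef, hSsum]
      exact hk'
    · have heq : (∑ i, round (quota n v H' i)) = (H' : ℤ) :=
        le_antisymm (not_lt.mp hc) hge
      have hkzT : round (quota n v H' k) + ∑ i ∈ T, round (quota n v H' i) = (h' k : ℤ) := by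
        rw [htriR, hSsum] at heq
        linarith
      have hk0 : round (quota n v H' k) = (h' k : ℤ) := by linarith
      have hT0 : ∑ i ∈ T, round (quota n v H' i) = 0 := by linarith
      have hTzero : ∀ i ∈ T, round (quota n v H' i) = 0 := by
        intro i hi
        have := (Finset.sum_eq_zero_iff_of_nonneg (fun i _ => hnn i)).mp hT0
        exact this i hi
      have hall : ∀ i : Fin n, (h' i : ℤ) = round (quota n v H' i) := by
        intro i
        rcases lt_trichotomy i k with hik | hik | hik
        · exact (key i (hlt i hik)).symm
        · rw [hik]; exact hk0.symm
        · have hiT : i ∈ T := by simp [hTdef, hik]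
          rw [hz i hik, hTzero i hiT]
          simp
      refine Or.inl ⟨le_of_eq heq, ?_, fun i _ => hall i⟩
      rw [heq, sub_self, add_zero]
      exact hall q0
end
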